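/- arXiv:1612.05614 — 8 statements merged into one kernel-verified Lean document; each statement's English description precedes it below -/
import Mathlib

section
/- Let f : ℝⁿ → ℝ be differentiable with L-Lipschitz gradient (L > 0), let α ∈ (0,1) and σ ∈ (0,1), let 0 < a ≤ b, and let H be an n×n symmetric positive definite matrix all of whose eigenvalues lie in [a, b]. Fix x ∈ ℝⁿ and set v = −H⁻¹∇f(x). Then for every step size η with 0 < η ≤ 2(1−α)a²/(bL), the Armijo condition f(x + ηv) ≤ f(x) + α η ⟨∇f(x), v⟩ holds. In particular, there exists a nonnegative integer s such that f(x + σˢ v) ≤ f(x) + α σˢ ⟨∇f(x), v⟩, and this holds for every integer s ≥ max{0, log(2(1−α)a²/(bL)) / log σ}. -/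
open scoped RealInnerProductSpace

lemma descent_lemma {n : ℕ} (f : EuclideanSpace ℝ (Fin n) → ℝ)
    (f' : EuclideanSpace ℝ (Fin n) → EuclideanSpace ℝ (Fin n))
    (hf : ∀ x, HasGradientAt f (f' x) x) (L : ℝ)
    (hlip : ∀ x y, ‖f' x - f' y‖ ≤ L * ‖x - y‖)
    (x v : EuclideanSpace ℝ (Fin n)) (η : ℝ) (hη : 0 ≤ η) :
    f (x + η • v) ≤ f x + η * ⟪f' x, v⟫ + L / 2 * η^2 * ‖v‖^2 := by
  set h : ℝ → ℝ := fun t => f (x + t • v) - t * ⟪f' x, v⟫ - L / 2 * t^2 * ‖v‖^2 with hh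
  have hderiv : ∀ t : ℝ, HasDerivAt h (⟪f' (x + t • v), v⟫ - ⟪f' x, v⟫ - L * t * ‖v‖^2) t := by
    intro t
    have hc : HasDerivAt (fun t : ℝ => x + t • v) v t := by
      simpa using ((hasDerivAt_id t).smul_const v).const_add x
    have h1 : HasDerivAt (fun t : ℝ => f (x + t • v)) ⟪f' (x + t • v), v⟫ t := by
      have := ((hf (x + t • v)).hasFDerivAt.comp_hasDerivAt t hc)
      simp at this
      exact this
    have h2 : HasDerivAt (fun t : ℝ => t * ⟪f' x, v⟫) ⟪f' x, v⟫ t := by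
      simpa using (hasDerivAt_id t).mul_const ⟪f' x, v⟫
    have h3 : HasDerivAt (fun t : ℝ => L / 2 * t^2 * ‖v‖^2) (L * t * ‖v‖^2) t := by
      have hp : HasDerivAt (fun t : ℝ => t^2) (2 * t) t := by
        simpa using hasDerivAt_pow 2 t
      have := (hp.const_mul (L / 2)).mul_const (‖v‖^2)
      rw [show (L * t * ‖v‖^2) = L / 2 * (2 * t) * ‖v‖^2 by ring]
      exact this
    exact (h1.sub h2).sub h3
  have hdiff : Differentiable ℝ h := fun t => (hderiv t).differentiableAt
  have hanti : AntitoneOn h (Set.Icc 0 η) := by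
    refine antitoneOn_of_deriv_nonpos (convex_Icc 0 η) hdiff.continuous.continuousOn
      (fun t _ => (hdiff t).differentiableWithinAt) ?_
    intro t ht
    rw [(hderiv t).deriv]
    rw [interior_Icc] at ht
    have h1 : ⟪f' (x + t • v) - f' x, v⟫ ≤ ‖f' (x + t • v) - f' x‖ * ‖v‖ :=
      real_inner_le_norm _ _
    have h2 : ‖f' (x + t • v) - f' x‖ ≤ L * (t * ‖v‖) := by
      have := hlip (x + t • v) x
      simpa [norm_smul, abs_of_nonneg ht.1.le] using this
    have h3 : ⟪f' (x + t • v) - f' x, v⟫ = ⟪f' (x + t • v), v⟫ - ⟪f' x, v⟫ :=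
      inner_sub_left _ _ _
    nlinarith [norm_nonneg v, norm_nonneg (f' (x + t • v) - f' x),
      mul_le_mul_of_nonneg_right h2 (norm_nonneg v)]
  have key := hanti (Set.left_mem_Icc.2 hη) (Set.right_mem_Icc.2 hη) hη
  have h0 : h 0 = f x := by simp [hh]
  have hη' : h η = f (x + η • v) - η * ⟪f' x, v⟫ - L / 2 * η^2 * ‖v‖^2 := rfl
  rw [h0, hη'] at key
  linarith



lemma rayleigh_lb {n : ℕ} (H : Matrix (Fin n) (Fin n) ℝ) (hH : H.IsHermitian)
    (a : ℝ) (ha : ∀ i, a ≤ hH.eigenvalues i) (z : EuclideanSpace ℝ (Fin n)) :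
    a * ‖z‖^2 ≤ ⟪z, Matrix.toEuclideanLin H z⟫ := by
  set B := hH.eigenvectorBasis with hB
  set c : Fin n → ℝ := fun i => ⟪B i, z⟫ with hc
  have hTB : ∀ j, Matrix.toEuclideanLin H (B j) = hH.eigenvalues j • B j := by
    intro j
    have := hH.mulVec_eigenvectorBasis j
    ext i
    have h2 := congrFun this i
    simpa [Matrix.toEuclideanLin_apply] using h2
  have hz : z = ∑ i, c i • B i := (B.sum_repr' z).symm
  have hTz : Matrix.toEuclideanLin H z = ∑ i, (hH.eigenvalues i * c i) • B i := by
    conv_lhs => rw [hz]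
    rw [map_sum]
    refine Finset.sum_congr rfl fun i _ => ?_
    rw [map_smul, hTB i, smul_smul, mul_comm]
  have hinner : ⟪z, Matrix.toEuclideanLin H z⟫ = ∑ i, hH.eigenvalues i * c i ^ 2 := by
    rw [hTz, inner_sum]
    refine Finset.sum_congr rfl fun i _ => ?_
    rw [real_inner_smul_right]
    have : ⟪z, B i⟫ = c i := (real_inner_comm z (B i)).symm
    rw [this]; ring
  have hnorm : ‖z‖^2 = ∑ i, c i ^ 2 := by
    have h1 := B.sum_inner_mul_inner z z
    have h2 : ⟪z, z⟫ = ‖z‖^2 := real_inner_self_eq_norm_sq z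
    rw [← h2, ← h1]
    refine Finset.sum_congr rfl fun i _ => ?_
    have : ⟪z, B i⟫ = c i := (real_inner_comm z (B i)).symm
    rw [this]; ring
  rw [hinner, hnorm, Finset.mul_sum]
  exact Finset.sum_le_sum fun i _ => mul_le_mul_of_nonneg_right (ha i) (sq_nonneg _)


/-- For `f` differentiable with `L`-Lipschitz gradient, `H` symmetric positive
definite with eigenvalues in `[a, b]`, and `v = −H⁻¹∇f(x)`, the Armijo condition holds for every
step size `0 < η ≤ 2(1−α)a²/(bL)`; in particular it holds for `η = σˢ` for some natural `s`, and
for every natural `s ≥ max{0, log(2(1−α)a²/(bL))/log σ}`. -/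
theorem armijo_backtracking_terminates {n : ℕ}
    (f : EuclideanSpace ℝ (Fin n) → ℝ)
    (f' : EuclideanSpace ℝ (Fin n) → EuclideanSpace ℝ (Fin n))
    (hf : ∀ x, HasGradientAt f (f' x) x)
    (L : ℝ) (hL : 0 < L)
    (hlip : ∀ x y, ‖f' x - f' y‖ ≤ L * ‖x - y‖)
    (α : ℝ) (hα : α ∈ Set.Ioo (0:ℝ) 1)
    (σ : ℝ) (hσ : σ ∈ Set.Ioo (0:ℝ) 1)
    (a b : ℝ) (ha : 0 < a) (hab : a ≤ b)
    (H : Matrix (Fin n) (Fin n) ℝ) (hH : H.PosDef)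
    (heig : ∀ i, hH.1.eigenvalues i ∈ Set.Icc a b)
    (x : EuclideanSpace ℝ (Fin n)) (v : EuclideanSpace ℝ (Fin n))
    (hv : ∀ i, v i = -(H⁻¹.mulVec (fun j => f' x j) i)) :
    (∀ η : ℝ, 0 < η → η ≤ 2 * (1 - α) * a^2 / (b * L) →
        f (x + η • v) ≤ f x + α * η * ⟪f' x, v⟫)
    ∧ (∃ s : ℕ, f (x + σ^s • v) ≤ f x + α * σ^s * ⟪f' x, v⟫)
    ∧ (∀ s : ℕ, (s : ℝ) ≥ max 0 (Real.log (2 * (1 - α) * a^2 / (b * L)) / Real.log σ) →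
        f (x + σ^s • v) ≤ f x + α * σ^s * ⟪f' x, v⟫) := by
  obtain ⟨hα0, hα1⟩ := hα
  obtain ⟨hσ0, hσ1⟩ := hσ
  have hb : 0 < b := lt_of_lt_of_le ha hab
  set z : EuclideanSpace ℝ (Fin n) := -v with hz
  have hzv : (fun j => z j) = H⁻¹.mulVec (fun j => f' x j) := by
    funext j
    have := hv j
    simp only [hz]
    simp [this]
  have hdet : IsUnit H.det := isUnit_iff_ne_zero.2 (ne_of_gt hH.det_pos)
  have hHz : Matrix.toEuclideanLin H z = f' x := by
    ext i
    rw [Matrix.toEuclideanLin_apply]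
    show (H.mulVec (fun j => z j)) i = f' x i
    rw [hzv, Matrix.mulVec_mulVec, Matrix.mul_nonsing_inv _ hdet, Matrix.one_mulVec]
  have hray : a * ‖z‖^2 ≤ ⟪z, f' x⟫ := by
    have := rayleigh_lb H hH.1 a (fun i => (heig i).1) z
    rwa [hHz] at this
  have hnv : ‖z‖ = ‖v‖ := by rw [hz, norm_neg]
  have hgv : ⟪f' x, v⟫ ≤ -(a * ‖v‖^2) := by
    have h1 : ⟪f' x, v⟫ = -⟪z, f' x⟫ := by
      rw [hz, real_inner_comm]
      simp [inner_neg_left]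
    rw [h1, ← hnv]
    linarith
  have h1α : 0 < 1 - α := by linarith
  have hcpos : 0 < 2 * (1 - α) * a^2 / (b * L) := by
    exact div_pos (mul_pos (by linarith : (0:ℝ) < 2 * (1 - α)) (pow_pos ha 2)) (mul_pos hb hL)
  have P1 : ∀ η : ℝ, 0 < η → η ≤ 2 * (1 - α) * a^2 / (b * L) →
      f (x + η • v) ≤ f x + α * η * ⟪f' x, v⟫ := by
    intro η hη hηc
    have hdesc := descent_lemma f f' hf L hlip x v η hη.le
    have hηbL : η * (b * L) ≤ 2 * (1 - α) * a^2 := by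
      rw [div_eq_mul_inv] at hηc
      have := mul_le_mul_of_nonneg_right hηc (le_of_lt (mul_pos hb hL))
      rwa [mul_assoc, inv_mul_cancel₀ (ne_of_gt (mul_pos hb hL)), mul_one] at this
    have haL : η * L ≤ 2 * (1 - α) * a := by
      nlinarith [mul_le_mul_of_nonneg_left hab (by nlinarith : (0:ℝ) ≤ 2 * (1 - α) * a), hb]
    have key1 : L / 2 * η^2 * ‖v‖^2 ≤ (1 - α) * a * η * ‖v‖^2 := by
      nlinarith [sq_nonneg ‖v‖, mul_le_mul_of_nonneg_right haL
        (mul_nonneg hη.le (sq_nonneg ‖v‖))]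
    have key2 : (1 - α) * η * ⟪f' x, v⟫ ≤ -((1 - α) * η * (a * ‖v‖^2)) := by
      have := mul_le_mul_of_nonneg_left hgv
        (mul_nonneg (by linarith : (0:ℝ) ≤ 1 - α) hη.le)
      linarith
    linarith
  have P3 : ∀ s : ℕ, (s : ℝ) ≥ max 0 (Real.log (2 * (1 - α) * a^2 / (b * L)) / Real.log σ) →
      f (x + σ^s • v) ≤ f x + α * σ^s * ⟪f' x, v⟫ := by
    intro s hs
    have hlogσ : Real.log σ < 0 := Real.log_neg hσ0 hσ1
    have h1 : Real.log (2 * (1 - α) * a^2 / (b * L)) / Real.log σ ≤ (s : ℝ) :=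
      le_trans (le_max_right _ _) hs
    have h2 : (s : ℝ) * Real.log σ ≤ Real.log (2 * (1 - α) * a^2 / (b * L)) :=
      (div_le_iff_of_neg hlogσ).mp h1
    have h3 : σ ^ s ≤ 2 * (1 - α) * a^2 / (b * L) := by
      have := (Real.log_le_log_iff (pow_pos hσ0 s) hcpos).mp (by rwa [Real.log_pow])
      exact this
    exact P1 _ (pow_pos hσ0 s) h3
  exact ⟨P1, ⟨⌈max 0 (Real.log (2 * (1 - α) * a^2 / (b * L)) / Real.log σ)⌉₊,
    P3 _ (Nat.le_ceil _)⟩, P3⟩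
end

section
/- Let f : ℝⁿ → ℝ be differentiable and coercive with L-Lipschitz gradient, and let H : ℝⁿ → ℝ^{n×n} be a continuous map into the symmetric positive definite matrices. Fix α, σ ∈ (0,1) and x₀ ∈ ℝⁿ, and generate x_{k+1} = x_k + σ^{s_k} v_k, where v_k = −H(x_k)⁻¹ ∇f(x_k) and s_k is the smallest nonnegative integer s for which f(x_k + σˢ v_k) ≤ f(x_k) + α σˢ ⟨∇f(x_k), v_k⟩. Then there exists a constant c > 0 (depending only on α, σ, L, and spectral bounds of H on the sublevel set {x : f(x) ≤ f(x₀)}) such that for every k, f(x_k) − f(x_{k+1}) ≥ c ‖∇f(x_k)‖². -/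
open scoped RealInnerProductSpace
open Matrix

theorem my_descent {E : Type*} [NormedAddCommGroup E] [InnerProductSpace ℝ E] [CompleteSpace E]
    {f : E → ℝ} {f' : E → E} (hf : ∀ y, HasGradientAt f (f' y) y)
    {L : ℝ} (hlip : ∀ a b, ‖f' a - f' b‖ ≤ L * ‖a - b‖) (x d : E) :
    f (x + d) ≤ f x + ⟪f' x, d⟫ + L / 2 * ‖d‖ ^ 2 := by
  set c := ⟪f' x, d⟫ with hc
  set b := L / 2 * ‖d‖ ^ 2 with hb
  have hcurve : ∀ t : ℝ, HasDerivAt (fun t : ℝ => x + t • d) d t := by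
    intro t
    simpa using ((hasDerivAt_id t).smul_const d).const_add x
  have hφ : ∀ t : ℝ, HasDerivAt (fun t => f (x + t • d)) ⟪f' (x + t • d), d⟫ t := by
    intro t
    have h1 := (hf (x + t • d)).hasFDerivAt.comp_hasDerivAt t (hcurve t)
    exact h1
  have hg1 : ∀ t : ℝ, HasDerivAt (fun t : ℝ => f (x + t • d) - t * c - t ^ 2 * b)
      (⟪f' (x + t • d), d⟫ - c - 2 * t * b) t := by
    intro t
    have h2 := (((hφ t).sub ((hasDerivAt_id t).mul_const c)).sub
      ((hasDerivAt_pow 2 t).mul_const b))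
    simpa [pow_one, mul_assoc, Pi.sub_def] using h2
  have hanti : AntitoneOn (fun t : ℝ => f (x + t • d) - t * c - t ^ 2 * b) (Set.Icc 0 1) := by
    apply antitoneOn_of_deriv_nonpos (convex_Icc (0:ℝ) 1)
    · exact Continuous.continuousOn (by
        have : Differentiable ℝ (fun t : ℝ => f (x + t • d) - t * c - t ^ 2 * b) :=
          fun t => (hg1 t).differentiableAt
        exact this.continuous)
    · exact fun t _ => (hg1 t).differentiableAt.differentiableWithinAt
    · intro t ht
      rw [interior_Icc] at ht
      rw [(hg1 t).deriv]
      have h3 : ⟪f' (x + t • d) - f' x, d⟫ ≤ ‖f' (x + t • d) - f' x‖ * ‖d‖ :=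
        real_inner_le_norm _ _
      have h4 : ‖f' (x + t • d) - f' x‖ ≤ L * ‖t • d‖ := by
        simpa using hlip (x + t • d) x
      have h5 : ‖t • d‖ = t * ‖d‖ := by
        rw [norm_smul, Real.norm_eq_abs, abs_of_pos ht.1]
      have h6 : ⟪f' (x + t • d) - f' x, d⟫ = ⟪f' (x + t • d), d⟫ - c := by
        rw [inner_sub_left, hc]
      have h4' : ‖f' (x + t • d) - f' x‖ ≤ L * (t * ‖d‖) := by rw [← h5]; exact h4
      have h7 : ‖f' (x + t • d) - f' x‖ * ‖d‖ ≤ L * (t * ‖d‖) * ‖d‖ :=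
        mul_le_mul_of_nonneg_right h4' (norm_nonneg d)
      have hb2 : 2 * t * b = L * (t * ‖d‖) * ‖d‖ := by rw [hb]; ring
      linarith [h3, h6, h7, hb2]
  have key := hanti (Set.left_mem_Icc.2 zero_le_one) (Set.right_mem_Icc.2 zero_le_one)
    zero_le_one
  have key' : f (x + d) - c - b ≤ f x := by simpa using key
  linarith [key']

theorem inner_eq_dotProduct' {n : ℕ} (u w : EuclideanSpace ℝ (Fin n)) :
    ⟪u, w⟫ = (fun i => u i) ⬝ᵥ (fun i => w i) := by
  simp [PiLp.inner_apply, dotProduct, RCLike.inner_apply, mul_comm]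

set_option maxHeartbeats 1000000 in
/-- For the Armijo-safeguarded quasi-Newton iteration
`x_{k+1} = x_k + σ^{s_k} v_k`, `v_k = −H(x_k)⁻¹∇f(x_k)`, with `f` coercive and Lipschitz
differentiable and `H` a continuous field of symmetric positive definite matrices, there is a
constant `c > 0` with `f(x_k) − f(x_{k+1}) ≥ c‖∇f(x_k)‖²` for every `k`. -/
theorem sufficient_decrease_of_armijo {n : ℕ}
    (f : EuclideanSpace ℝ (Fin n) → ℝ)
    (f' : EuclideanSpace ℝ (Fin n) → EuclideanSpace ℝ (Fin n))
    (hf : ∀ x, HasGradientAt f (f' x) x)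
    (L : NNReal) (hlip : LipschitzWith L f')
    (hcoercive : ∀ t : ℝ, IsCompact {x : EuclideanSpace ℝ (Fin n) | f x ≤ t})
    (H : EuclideanSpace ℝ (Fin n) → Matrix (Fin n) (Fin n) ℝ)
    (hHcont : Continuous H) (hHpd : ∀ x, (H x).PosDef)
    (α : ℝ) (hα : α ∈ Set.Ioo (0:ℝ) 1)
    (σ : ℝ) (hσ : σ ∈ Set.Ioo (0:ℝ) 1)
    (x₀ : EuclideanSpace ℝ (Fin n))
    (x v : ℕ → EuclideanSpace ℝ (Fin n)) (s : ℕ → ℕ)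
    (hx0 : x 0 = x₀)
    (hv : ∀ k, ∀ i, v k i = -((H (x k))⁻¹.mulVec (fun j => f' (x k) j) i))
    (hs : ∀ k, IsLeast {m : ℕ |
      f (x k + σ^m • v k) ≤ f (x k) + α * σ^m * ⟪f' (x k), v k⟫} (s k))
    (hrec : ∀ k, x (k + 1) = x k + σ^(s k) • v k) :
    ∃ c > 0, ∀ k, f (x k) - f (x (k + 1)) ≥ c * ‖f' (x k)‖^2 := by
  obtain ⟨hα0, hα1⟩ := hα
  obtain ⟨hσ0, hσ1⟩ := hσ
  have hKpd : ∀ y, ((H y)⁻¹).PosDef := fun y => (hHpd y).inv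
  -- inner products as dot products
  have hip : ∀ k, ⟪f' (x k), v k⟫ =
      -((fun i => f' (x k) i) ⬝ᵥ ((H (x k))⁻¹ *ᵥ fun j => f' (x k) j)) := by
    intro k
    rw [inner_eq_dotProduct']
    simp only [hv, dotProduct, mul_neg, Finset.sum_neg_distrib]

  have hip_nonpos : ∀ k, ⟪f' (x k), v k⟫ ≤ 0 := by
    intro k
    rw [hip k]
    have h := (hKpd (x k)).posSemidef.re_dotProduct_nonneg (fun i => f' (x k) i)
    simpa using h
  -- monotone decrease along iterates
  have hdec : ∀ k, f (x (k+1)) ≤ f (x k) := by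
    intro k
    have h1 := (hs k).1
    rw [hrec k]
    have h2 : α * σ ^ (s k) * ⟪f' (x k), v k⟫ ≤ 0 :=
      mul_nonpos_of_nonneg_of_nonpos (by positivity) (hip_nonpos k)
    calc f (x k + σ ^ (s k) • v k) ≤ f (x k) + α * σ ^ (s k) * ⟪f' (x k), v k⟫ := h1
      _ ≤ f (x k) := by linarith
  have hS : ∀ k, f (x k) ≤ f x₀ := by
    intro k
    induction k with
    | zero => rw [hx0]
    | succ k ih => exact le_trans (hdec k) ih
  rcases Nat.eq_zero_or_pos n with hn | hn
  · subst hn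
    refine ⟨1, one_pos, fun k => ?_⟩
    have h1 : ‖f' (x k)‖ = 0 := by simp [EuclideanSpace.norm_eq]
    have := hdec k
    rw [h1]
    norm_num
    linarith
  -- n ≥ 1 : compactness constants
  have hScomp : IsCompact {y : EuclideanSpace ℝ (Fin n) | f y ≤ f x₀} := hcoercive (f x₀)
  have hKcont : Continuous fun y => (H y)⁻¹ := by
    have hdet : ∀ y : EuclideanSpace ℝ (Fin n), (H y).det ≠ 0 :=
      fun y => ne_of_gt (hHpd y).det_pos
    have h1 : Continuous fun y => (H y).det⁻¹ • (H y).adjugate :=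
      ((hHcont.matrix_det).inv₀ hdet).smul hHcont.matrix_adjugate
    simpa only [Matrix.inv_def, Ring.inverse_eq_inv'] using h1
  have hcoords : Continuous fun u : EuclideanSpace ℝ (Fin n) => (fun i => u i : Fin n → ℝ) :=
    (PiLp.continuousLinearEquiv 2 ℝ (fun _ : Fin n => ℝ)).continuous
  set Q := {y : EuclideanSpace ℝ (Fin n) | f y ≤ f x₀} ×ˢ
      Metric.sphere (0 : EuclideanSpace ℝ (Fin n)) 1 with hQdef
  have hQ : IsCompact Q := hScomp.prod (isCompact_sphere _ _)
  have hQne : Q.Nonempty := by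
    refine ⟨(x₀, EuclideanSpace.single ⟨0, hn⟩ 1), ⟨Set.mem_setOf.2 (le_refl _), ?_⟩⟩
    simp [EuclideanSpace.norm_single]
  set q : EuclideanSpace ℝ (Fin n) × EuclideanSpace ℝ (Fin n) → ℝ :=
    fun p => (fun i => p.2 i) ⬝ᵥ ((H p.1)⁻¹ *ᵥ fun i => p.2 i) with hqdef
  have hqcont : Continuous q := by
    have h2 : Continuous fun p : EuclideanSpace ℝ (Fin n) × EuclideanSpace ℝ (Fin n) =>
        (fun i => p.2 i : Fin n → ℝ) := hcoords.comp continuous_snd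
    exact h2.dotProduct ((hKcont.comp continuous_fst).matrix_mulVec h2)
  obtain ⟨p, hpQ, hpmin⟩ := hQ.exists_isMinOn hQne hqcont.continuousOn
  set μ := q p with hμdef
  have hμpos : 0 < μ := by
    have hne : (fun i => p.2 i : Fin n → ℝ) ≠ 0 := by
      intro h0
      have hz : p.2 = 0 := by ext i; simpa using congrFun h0 i
      have := hpQ.2
      rw [hz] at this
      simp at this
    have := (hKpd p.1).dotProduct_mulVec_pos hne
    simpa using this
  set r : EuclideanSpace ℝ (Fin n) × EuclideanSpace ℝ (Fin n) → ℝ :=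
    fun p => ‖(WithLp.equiv 2 (Fin n → ℝ)).symm ((H p.1)⁻¹ *ᵥ fun i => p.2 i)‖ with hrdef
  have hrcont : Continuous r := by
    have h2 : Continuous fun p : EuclideanSpace ℝ (Fin n) × EuclideanSpace ℝ (Fin n) =>
        (fun i => p.2 i : Fin n → ℝ) := hcoords.comp continuous_snd
    exact (((PiLp.continuousLinearEquiv 2 ℝ (fun _ : Fin n => ℝ)).symm.continuous).comp
      ((hKcont.comp continuous_fst).matrix_mulVec h2)).norm
  obtain ⟨pM, hpMQ, hpMmax⟩ := hQ.exists_isMaxOn hQne hrcont.continuousOn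
  set M := r pM + 1 with hMdef
  have hMpos : 0 < M := by
    have : 0 ≤ r pM := norm_nonneg _
    linarith
  -- scaling: quadratic-form lower bound on the sublevel set
  have hq_lb : ∀ y, f y ≤ f x₀ → ∀ u : EuclideanSpace ℝ (Fin n),
      μ * ‖u‖^2 ≤ (fun i => u i) ⬝ᵥ ((H y)⁻¹ *ᵥ fun i => u i) := by
    intro y hy u
    by_cases hu : u = 0
    · subst hu
      simp [show (fun i => (0 : EuclideanSpace ℝ (Fin n)) i) = (0 : Fin n → ℝ) from rfl]
    · have hun : 0 < ‖u‖ := norm_pos_iff.2 hu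
      set u' : EuclideanSpace ℝ (Fin n) := ‖u‖⁻¹ • u with hu'def
      have hu'mem : u' ∈ Metric.sphere (0 : EuclideanSpace ℝ (Fin n)) 1 := by
        simp [hu'def, norm_smul, abs_of_pos (inv_pos.2 hun), inv_mul_cancel₀ (ne_of_gt hun)]
      have hmin := hpmin (Set.mk_mem_prod hy hu'mem : (y, u') ∈ Q)
      have hcoord : (fun i => u' i : Fin n → ℝ) = ‖u‖⁻¹ • (fun i => u i) := rfl
      have hq' : q (y, u') = ‖u‖⁻¹ * (‖u‖⁻¹ * ((fun i => u i) ⬝ᵥ ((H y)⁻¹ *ᵥ fun i => u i))) := by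
        rw [hqdef]
        show (‖u‖⁻¹ • (fun i => u i)) ⬝ᵥ ((H y)⁻¹ *ᵥ (‖u‖⁻¹ • fun i => u i)) = _
        rw [Matrix.mulVec_smul, smul_dotProduct, dotProduct_smul, smul_eq_mul,
          smul_eq_mul]
      have h5 : μ ≤ q (y, u') := hmin
      rw [hq'] at h5
      have h6 := mul_le_mul_of_nonneg_left h5 (le_of_lt (mul_pos hun hun))
      calc μ * ‖u‖^2 = ‖u‖ * ‖u‖ * μ := by ring
        _ ≤ ‖u‖ * ‖u‖ * (‖u‖⁻¹ * (‖u‖⁻¹ * ((fun i => u i) ⬝ᵥ ((H y)⁻¹ *ᵥ fun i => u i)))) := h6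
        _ = (fun i => u i) ⬝ᵥ ((H y)⁻¹ *ᵥ fun i => u i) := by
            field_simp
  -- scaling: operator-norm style upper bound on the sublevel set
  have hr_ub : ∀ y, f y ≤ f x₀ → ∀ u : EuclideanSpace ℝ (Fin n),
      ‖(WithLp.equiv 2 (Fin n → ℝ)).symm ((H y)⁻¹ *ᵥ fun i => u i)‖ ≤ M * ‖u‖ := by
    intro y hy u
    by_cases hu : u = 0
    · subst hu
      rw [show (fun i => (0 : EuclideanSpace ℝ (Fin n)) i) = (0 : Fin n → ℝ) from rfl,
        Matrix.mulVec_zero, WithLp.equiv_symm_apply, WithLp.toLp_zero]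
      simp
    · have hun : 0 < ‖u‖ := norm_pos_iff.2 hu
      set u' : EuclideanSpace ℝ (Fin n) := ‖u‖⁻¹ • u with hu'def
      have hu'mem : u' ∈ Metric.sphere (0 : EuclideanSpace ℝ (Fin n)) 1 := by
        simp [hu'def, norm_smul, abs_of_pos (inv_pos.2 hun), inv_mul_cancel₀ (ne_of_gt hun)]
      have hmax := hpMmax (Set.mk_mem_prod hy hu'mem : (y, u') ∈ Q)
      have hcoord : (fun i => u' i : Fin n → ℝ) = ‖u‖⁻¹ • (fun i => u i) := rfl
      have hr' : r (y, u') =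
          ‖u‖⁻¹ * ‖(WithLp.equiv 2 (Fin n → ℝ)).symm ((H y)⁻¹ *ᵥ fun i => u i)‖ := by
        rw [hrdef]
        show ‖(WithLp.equiv 2 (Fin n → ℝ)).symm ((H y)⁻¹ *ᵥ (‖u‖⁻¹ • fun i => u i))‖ = _
        rw [Matrix.mulVec_smul, WithLp.equiv_symm_apply, WithLp.toLp_smul, norm_smul, Real.norm_eq_abs,
          abs_of_pos (inv_pos.2 hun)]
      have h5 : r (y, u') ≤ r pM := hmax
      rw [hr'] at h5
      have h6 := mul_le_mul_of_nonneg_left h5 (le_of_lt hun)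
      rw [← mul_assoc, mul_inv_cancel₀ (ne_of_gt hun), one_mul] at h6
      calc ‖(WithLp.equiv 2 (Fin n → ℝ)).symm ((H y)⁻¹ *ᵥ fun i => u i)‖ ≤ ‖u‖ * r pM := h6
        _ ≤ M * ‖u‖ := by rw [hMdef]; nlinarith [norm_nonneg ((WithLp.equiv 2 (Fin n → ℝ)).symm ((H pM.1)⁻¹ *ᵥ fun i => pM.2 i))]
  -- Lipschitz constant, strictly positive
  set LL : ℝ := (L : ℝ) + 1 with hLLdef
  have hLLpos : 0 < LL := by positivity
  have hlipLL : ∀ a b : EuclideanSpace ℝ (Fin n), ‖f' a - f' b‖ ≤ LL * ‖a - b‖ := by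
    intro a b
    have h1 : ‖f' a - f' b‖ ≤ (L:ℝ) * ‖a - b‖ := by
      simpa [dist_eq_norm] using hlip.dist_le_mul a b
    have h2 : (L:ℝ) * ‖a - b‖ ≤ LL * ‖a - b‖ :=
      mul_le_mul_of_nonneg_right (by rw [hLLdef]; linarith) (norm_nonneg _)
    linarith
  -- the uniform step-size floor
  set τ := min 1 (σ * (2*(1-α)*μ / (LL * M^2))) with hτdef
  have hτpos : 0 < τ :=
    lt_min one_pos (mul_pos hσ0 (div_pos (by nlinarith) (by positivity)))
  have hτle1 : τ ≤ 1 := min_le_left _ _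
  -- the iterates expressed through the matrix field
  have hvk : ∀ k, v k = (WithLp.equiv 2 (Fin n → ℝ)).symm
      (-((H (x k))⁻¹ *ᵥ fun j => f' (x k) j)) := by
    intro k
    ext i
    rw [hv k i]
    rfl
  refine ⟨α * τ * μ, by positivity, fun k => ?_⟩
  have hxkS : f (x k) ≤ f x₀ := hS k
  by_cases hg : f' (x k) = 0
  · -- zero gradient: the iterate does not move
    have hvz : v k = 0 := by
      rw [hvk k, hg]
      rw [show (fun j => (0 : EuclideanSpace ℝ (Fin n)) j) = (0 : Fin n → ℝ) from rfl,
        Matrix.mulVec_zero, neg_zero, WithLp.equiv_symm_apply, WithLp.toLp_zero]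
    rw [hrec k, hvz, hg]
    simp
  · have hgn : 0 < ‖f' (x k)‖ := norm_pos_iff.2 hg
    -- lower bound on the directional decrease
    have hlb : μ * ‖f' (x k)‖^2 ≤ (fun i => f' (x k) i) ⬝ᵥ ((H (x k))⁻¹ *ᵥ fun j => f' (x k) j) :=
      hq_lb (x k) hxkS (f' (x k))
    have hipk : ⟪f' (x k), v k⟫ ≤ -(μ * ‖f' (x k)‖^2) := by
      rw [hip k]
      linarith
    have hipneg : ⟪f' (x k), v k⟫ < 0 := lt_of_le_of_lt hipk (by nlinarith [mul_pos hμpos (pow_pos hgn 2)])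
    have hvne : v k ≠ 0 := by
      intro h0
      rw [h0, inner_zero_right] at hipneg
      exact lt_irrefl 0 hipneg
    have hvn : 0 < ‖v k‖ := norm_pos_iff.2 hvne
    -- norm upper bound on the direction
    have hub : ‖v k‖ ≤ M * ‖f' (x k)‖ := by
      rw [hvk k, WithLp.equiv_symm_apply, WithLp.toLp_neg, norm_neg]
      exact hr_ub (x k) hxkS (f' (x k))
    have hnv2 : ‖v k‖^2 ≤ M^2 * ‖f' (x k)‖^2 := by
      have h12 := pow_le_pow_left₀ (norm_nonneg (v k)) hub 2
      rw [mul_pow] at h12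
      exact h12
    -- sufficiency of small steps for the Armijo test
    have suff : ∀ η : ℝ, 0 < η →
        η ≤ 2*(1-α)*(-⟪f' (x k), v k⟫) / (LL * ‖v k‖^2) →
        f (x k + η • v k) ≤ f (x k) + α * η * ⟪f' (x k), v k⟫ := by
      intro η hη hη2
      have hd := my_descent hf hlipLL (x k) (η • v k)
      rw [real_inner_smul_right] at hd
      have hns : ‖η • v k‖^2 = η^2 * ‖v k‖^2 := by
        rw [norm_smul, Real.norm_eq_abs, mul_pow, sq_abs]
      rw [hns] at hd
      have hden : 0 < LL * ‖v k‖^2 := by positivity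
      have h8 : η * (LL * ‖v k‖^2) ≤ 2*(1-α)*(-⟪f' (x k), v k⟫) := (le_div_iff₀ hden).1 hη2
      nlinarith [hd, mul_le_mul_of_nonneg_left h8 hη.le]
    -- comparison of the uniform threshold with the pointwise one
    have hstar_le : 2*(1-α)*μ / (LL * M^2) ≤ 2*(1-α)*(-⟪f' (x k), v k⟫) / (LL * ‖v k‖^2) := by
      rw [div_le_div_iff₀ (by positivity) (by positivity)]
      have e2 : μ * ‖f' (x k)‖^2 ≤ -⟪f' (x k), v k⟫ := by linarith [hipk]
      have e1 : μ * ‖v k‖^2 ≤ μ * (M^2 * ‖f' (x k)‖^2) :=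
        mul_le_mul_of_nonneg_left hnv2 hμpos.le
      have e3 : μ * ‖v k‖^2 ≤ M^2 * (-⟪f' (x k), v k⟫) := by
        have := mul_le_mul_of_nonneg_left e2 (sq_nonneg M)
        nlinarith [e1]
      have e5 : (0:ℝ) ≤ 2*(1-α)*LL := by nlinarith
      nlinarith [mul_le_mul_of_nonneg_left e3 e5]
    -- lower bound for the accepted step size
    have hstep : τ ≤ σ ^ (s k) := by
      cases hsk : s k with
      | zero => simpa using hτle1
      | succ m =>
        have hmnot : ¬ (f (x k + σ^m • v k) ≤ f (x k) + α * σ^m * ⟪f' (x k), v k⟫) := by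
          intro hmem
          have h9 := (hs k).2 hmem
          omega
        have hgt : 2*(1-α)*(-⟪f' (x k), v k⟫) / (LL * ‖v k‖^2) < σ^m := by
          by_contra hle
          push_neg at hle
          exact hmnot (suff (σ^m) (pow_pos hσ0 m) hle)
        have h10 : σ * (2*(1-α)*μ / (LL*M^2)) ≤ σ^(m+1) := by
          have h11 := mul_le_mul_of_nonneg_left (le_trans hstar_le hgt.le) hσ0.le
          exact le_trans h11 (le_of_eq (by ring))
        exact le_trans (min_le_right _ _) h10
    -- conclusion
    have harm : f (x k + σ ^ (s k) • v k) ≤ f (x k) + α * σ ^ (s k) * ⟪f' (x k), v k⟫ :=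
      (hs k).1
    rw [hrec k]
    have hpow : 0 < σ ^ (s k) := pow_pos hσ0 _
    have key : α * τ * μ * ‖f' (x k)‖^2 ≤ α * σ^(s k) * (-⟪f' (x k), v k⟫) := by
      have e4 : τ * (μ * ‖f' (x k)‖^2) ≤ σ^(s k) * (-⟪f' (x k), v k⟫) :=
        mul_le_mul hstep (by linarith [hipk]) (by positivity) hpow.le
      nlinarith [mul_le_mul_of_nonneg_left e4 hα0.le]
    nlinarith [key, harm]
end

section
/- Let f : ℝⁿ → ℝ be differentiable and coercive with L-Lipschitz gradient, and let H : ℝⁿ → ℝ^{n×n} be a continuous map into the symmetric positive definite matrices. Fix α, σ ∈ (0,1) and x₀ ∈ ℝⁿ, and generate the sequence x_{k+1} = ψ(x_k), where ψ(x) = x + σ^{s_x} v_x, v_x = −H(x)⁻¹∇f(x), and s_x is the smallest nonnegative integer s for which f(x + σˢ v_x) ≤ f(x) + α σˢ ⟨∇f(x), v_x⟩. Then: (i) ‖∇f(x_k)‖ → 0 as k → ∞; (ii) ‖x_{k+1} − x_k‖ → 0; (iii) every limit point of the sequence (x_k) is a stationary point of f (a point x with ∇f(x) = 0); and (iv) the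 set of limit points of (x_k) is compact and connected. -/
open scoped RealInnerProductSpace
open Matrix Filter

namespace MMAux

variable {n : ℕ}

noncomputable def toE (u : Fin n → ℝ) : EuclideanSpace ℝ (Fin n) :=
  (WithLp.equiv 2 _).symm u

noncomputable def ofE (u : EuclideanSpace ℝ (Fin n)) : Fin n → ℝ :=
  WithLp.equiv 2 _ u

@[simp] lemma ofE_toE (u : Fin n → ℝ) : ofE (toE u) = u := rfl
@[simp] lemma toE_ofE (u : EuclideanSpace ℝ (Fin n)) : toE (ofE u) = u := rfl
@[simp] lemma toE_zero : toE (0 : Fin n → ℝ) = 0 := rfl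
@[simp] lemma ofE_zero : ofE (0 : EuclideanSpace ℝ (Fin n)) = 0 := rfl

lemma inner_toE (a b : Fin n → ℝ) : ⟪toE a, toE b⟫ = a ⬝ᵥ b := by
  simp [toE, PiLp.inner_apply, dotProduct, mul_comm]

lemma toE_smul (r : ℝ) (u : Fin n → ℝ) : toE (r • u) = r • toE u := rfl
lemma toE_neg (u : Fin n → ℝ) : toE (-u) = -toE u := rfl

lemma uniform_bounds {K : Set (EuclideanSpace ℝ (Fin n))} (hK : IsCompact K)
    (G : EuclideanSpace ℝ (Fin n) → Matrix (Fin n) (Fin n) ℝ) (hG : Continuous G)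
    (hGpd : ∀ y, (G y).PosDef) :
    ∃ c > (0:ℝ), ∃ C > (0:ℝ), ∀ y ∈ K, ∀ u : Fin n → ℝ,
      c * ‖toE u‖^2 ≤ u ⬝ᵥ (G y).mulVec u ∧ ‖toE ((G y).mulVec u)‖ ≤ C * ‖toE u‖ := by
  classical
  set S : Set (EuclideanSpace ℝ (Fin n)) := Metric.sphere 0 1 with hSdef
  by_cases hKne : K.Nonempty
  swap
  · exact ⟨1, one_pos, 1, one_pos, fun y hy => absurd ⟨y, hy⟩ hKne⟩
  by_cases hSne : S.Nonempty
  swap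
  · refine ⟨1, one_pos, 1, one_pos, fun y hy u => ?_⟩
    have hu : toE u = 0 := by
      by_contra h
      exact hSne ⟨‖toE u‖⁻¹ • toE u, by
        simp [hSdef, norm_smul, abs_of_nonneg (inv_nonneg.2 (norm_nonneg _)),
          inv_mul_cancel₀ (norm_ne_zero_iff.2 h)]⟩
    have hu' : u = 0 := by
      have := congrArg ofE hu; simpa using this
    subst hu'
    simp [Matrix.mulVec_zero]
  have hScomp : IsCompact S := isCompact_sphere 0 1
  have hPcomp : IsCompact (K ×ˢ S) := hK.prod hScomp
  have hofE : Continuous (fun p : EuclideanSpace ℝ (Fin n) × EuclideanSpace ℝ (Fin n) =>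
      ofE p.2) := (PiLp.continuous_ofLp 2 _).comp continuous_snd
  have hcont1 : Continuous fun p : EuclideanSpace ℝ (Fin n) × EuclideanSpace ℝ (Fin n) =>
      ofE p.2 ⬝ᵥ (G p.1).mulVec (ofE p.2) :=
    hofE.dotProduct ((hG.comp continuous_fst).matrix_mulVec hofE)
  have hcont2 : Continuous fun p : EuclideanSpace ℝ (Fin n) × EuclideanSpace ℝ (Fin n) =>
      ‖toE ((G p.1).mulVec (ofE p.2))‖ :=
    (((PiLp.continuous_toLp 2 _).comp
      ((hG.comp continuous_fst).matrix_mulVec hofE))).norm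
  obtain ⟨pc, hpcP, hpcmin⟩ := hPcomp.exists_isMinOn (hKne.prod hSne) hcont1.continuousOn
  obtain ⟨pC, hpCP, hpCmax⟩ := hPcomp.exists_isMaxOn (hKne.prod hSne) hcont2.continuousOn
  set c : ℝ := ofE pc.2 ⬝ᵥ (G pc.1).mulVec (ofE pc.2) with hcdef
  set C : ℝ := ‖toE ((G pC.1).mulVec (ofE pC.2))‖ with hCdef
  have hc : 0 < c := by
    have hne : ofE pc.2 ≠ 0 := by
      intro h
      have : pc.2 = 0 := by have := congrArg toE h; simpa using this
      have h1 : ‖pc.2‖ = 1 := mem_sphere_zero_iff_norm.mp hpcP.2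
      rw [this] at h1; simp at h1
    have := (hGpd pc.1).re_dotProduct_pos (x := ofE pc.2) hne
    simpa using this
  refine ⟨c, hc, C + 1, by positivity, fun y hy u => ?_⟩
  by_cases hu : toE u = 0
  · have hu' : u = 0 := by have := congrArg ofE hu; simpa using this
    subst hu'
    simp [Matrix.mulVec_zero]
  · set r : ℝ := ‖toE u‖ with hrdef
    have hr0 : 0 < r := norm_pos_iff.2 hu
    set w : Fin n → ℝ := r⁻¹ • u with hwdef
    have hwS : toE w ∈ S := by
      simp only [hSdef, mem_sphere_zero_iff_norm, hwdef, toE_smul, norm_smul]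
      rw [Real.norm_eq_abs, abs_of_nonneg (inv_nonneg.2 hr0.le), inv_mul_cancel₀ hr0.ne']
    have hmem : (y, toE w) ∈ K ×ˢ S := ⟨hy, hwS⟩
    have hq1 : c ≤ ofE (toE w) ⬝ᵥ (G y).mulVec (ofE (toE w)) := isMinOn_iff.mp hpcmin _ hmem
    rw [ofE_toE] at hq1
    have hsc : w ⬝ᵥ (G y).mulVec w = r⁻¹ * (r⁻¹ * (u ⬝ᵥ (G y).mulVec u)) := by
      rw [hwdef, Matrix.mulVec_smul, smul_dotProduct, dotProduct_smul]
      simp [smul_eq_mul]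
    rw [hsc] at hq1
    constructor
    · have h2 : c * r ^ 2 ≤ (r⁻¹ * (r⁻¹ * (u ⬝ᵥ (G y).mulVec u))) * r ^ 2 :=
        mul_le_mul_of_nonneg_right hq1 (sq_nonneg r)
      have h3 : (r⁻¹ * (r⁻¹ * (u ⬝ᵥ (G y).mulVec u))) * r ^ 2 = u ⬝ᵥ (G y).mulVec u := by
        rw [pow_two]
        field_simp
      rw [h3] at h2
      exact h2
    · have hb : ‖toE ((G y).mulVec (ofE (toE w)))‖ ≤ C := isMaxOn_iff.mp hpCmax (y, toE w) hmem
      rw [ofE_toE] at hb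
      have hmv : (G y).mulVec w = r⁻¹ • (G y).mulVec u := by
        rw [hwdef, Matrix.mulVec_smul]
      rw [hmv, toE_smul, norm_smul, Real.norm_eq_abs,
        abs_of_nonneg (inv_nonneg.2 hr0.le)] at hb
      have h4 : r * (r⁻¹ * ‖toE ((G y).mulVec u)‖) ≤ r * C :=
        mul_le_mul_of_nonneg_left hb hr0.le
      rw [← mul_assoc, mul_inv_cancel₀ hr0.ne', one_mul] at h4
      calc ‖toE ((G y).mulVec u)‖ ≤ r * C := h4
        _ = C * r := mul_comm _ _
        _ ≤ (C + 1) * r := by nlinarith [hr0.le]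


lemma descent {E : Type*} [NormedAddCommGroup E] [InnerProductSpace ℝ E] [CompleteSpace E]
    (f : E → ℝ) (f' : E → E) (hf : ∀ z, HasGradientAt f (f' z) z)
    (L : NNReal) (hlip : LipschitzWith L f') (y w : E) :
    f (y + w) ≤ f y + ⟪f' y, w⟫ + (L : ℝ) * ‖w‖^2 := by
  set s := Metric.closedBall y ‖w‖ with hsdef
  have hconv : Convex ℝ s := convex_closedBall _ _
  have hder : ∀ z ∈ s, HasFDerivWithinAt f (InnerProductSpace.toDual ℝ E (f' z)) s z :=
    fun z _ => (hasGradientAt_iff_hasFDerivAt.mp (hf z)).hasFDerivWithinAt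
  have hbound : ∀ z ∈ s,
      ‖InnerProductSpace.toDual ℝ E (f' z) - InnerProductSpace.toDual ℝ E (f' y)‖
        ≤ (L : ℝ) * ‖w‖ := by
    intro z hz
    rw [← map_sub, (InnerProductSpace.toDual ℝ E).norm_map]
    calc ‖f' z - f' y‖ = dist (f' z) (f' y) := (dist_eq_norm _ _).symm
      _ ≤ (L : ℝ) * dist z y := hlip.dist_le_mul z y
      _ ≤ (L : ℝ) * ‖w‖ := by
          exact mul_le_mul_of_nonneg_left (Metric.mem_closedBall.mp hz) L.coe_nonneg
  have hys : y ∈ s := Metric.mem_closedBall_self (norm_nonneg w)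
  have hyw : y + w ∈ s := by
    simp [hsdef, Metric.mem_closedBall, dist_eq_norm]
  have key := hconv.norm_image_sub_le_of_norm_hasFDerivWithin_le' hder hbound hys hyw
  rw [add_sub_cancel_left, InnerProductSpace.toDual_apply_apply, Real.norm_eq_abs] at key
  have h1 : f (y + w) - f y - ⟪f' y, w⟫ ≤ (L : ℝ) * ‖w‖ * ‖w‖ :=
    (le_abs_self _).trans key
  nlinarith [sq_nonneg (‖w‖)]

lemma clusterSet_compact_connected {X : Type*} [MetricSpace X]
    {K : Set X} (hK : IsCompact K) (x : ℕ → X) (hxK : ∀ k, x k ∈ K)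
    (hstep : Tendsto (fun k => dist (x (k+1)) (x k)) atTop (nhds 0)) :
    IsCompact {p | MapClusterPt p atTop x} ∧ IsConnected {p | MapClusterPt p atTop x} := by
  classical
  set Ω := {p | MapClusterPt p atTop x} with hΩdef
  have hmapK : Filter.map x atTop ≤ 𝓟 K := by
    rw [Filter.le_principal_iff, Filter.mem_map]
    exact Filter.Eventually.of_forall hxK
  have hclosed : IsClosed Ω := isClosed_setOf_clusterPt (f := Filter.map x atTop)
  have hsub : Ω ⊆ K := fun p hp => by
    have h1 : ClusterPt p (𝓟 K) := hp.clusterPt.mono hmapK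
    have h2 : p ∈ closure K := mem_closure_iff_clusterPt.mpr h1
    rwa [hK.isClosed.closure_eq] at h2
  have hΩcomp : IsCompact Ω := hK.of_isClosed_subset hclosed hsub
  have hne : Ω.Nonempty := by
    obtain ⟨p, _, hp⟩ := hK.exists_mapClusterPt hmapK
    exact ⟨p, hp⟩
  have hnear : ∀ ε > (0:ℝ), ∀ᶠ k in atTop, ∃ p ∈ Ω, dist (x k) p < ε := by
    intro ε hε
    by_contra hcon
    rw [Filter.not_eventually] at hcon
    have hcon' : ∃ᶠ k in atTop, x k ∈ {y ∈ K | ∀ p ∈ Ω, ε ≤ dist y p} := by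
      apply hcon.mono
      intro k hk
      push_neg at hk
      exact ⟨hxK k, hk⟩
    set T := {y ∈ K | ∀ p ∈ Ω, ε ≤ dist y p} with hTdef
    have hTclosed : IsClosed T := by
      have hTeq : T = K ∩ ⋂ p ∈ Ω, {y | ε ≤ dist y p} := by
        ext z; simp [hTdef]
      rw [hTeq]
      exact hK.isClosed.inter (isClosed_biInter fun p _ =>
        isClosed_le continuous_const (continuous_id.dist continuous_const))
    have hTcomp : IsCompact T := hK.of_isClosed_subset hTclosed (fun z hz => hz.1)
    have hFne : (Filter.map x atTop ⊓ 𝓟 T).NeBot := by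
      rw [Filter.inf_principal_neBot_iff]
      intro U hU
      have hev : ∀ᶠ k in atTop, x k ∈ U := hU
      obtain ⟨k, hkT, hkU⟩ := (hcon'.and_eventually hev).exists
      exact ⟨x k, hkU, hkT⟩
    obtain ⟨q, hqT, hq⟩ := hTcomp.exists_clusterPt (f := Filter.map x atTop ⊓ 𝓟 T) inf_le_right
    have hqΩ : q ∈ Ω := (hq.mono inf_le_left : ClusterPt q (Filter.map x atTop))
    have := hqT.2 q hqΩ
    simp at this
    linarith
  refine ⟨hΩcomp, hne, ?_⟩
  intro U V hU hV hUV hUne hVne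
  by_contra hcon
  rw [Set.not_nonempty_iff_eq_empty] at hcon
  set A := Ω ∩ U with hAdef
  set B := Ω ∩ V with hBdef
  have hmemUV : ∀ p ∈ Ω, p ∈ U → p ∈ V → False := by
    intro p hpΩ hpU hpV
    have : p ∈ Ω ∩ (U ∩ V) := ⟨hpΩ, hpU, hpV⟩
    rw [hcon] at this
    exact this
  have hAeq : A = Ω \ V := by
    ext p
    constructor
    · rintro ⟨hpΩ, hpU⟩
      exact ⟨hpΩ, fun hpV => hmemUV p hpΩ hpU hpV⟩
    · rintro ⟨hpΩ, hpV⟩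
      rcases hUV hpΩ with h | h
      · exact ⟨hpΩ, h⟩
      · exact absurd h hpV
  have hBeq : B = Ω \ U := by
    ext p
    constructor
    · rintro ⟨hpΩ, hpV⟩
      exact ⟨hpΩ, fun hpU => hmemUV p hpΩ hpU hpV⟩
    · rintro ⟨hpΩ, hpU⟩
      rcases hUV hpΩ with h | h
      · exact absurd h hpU
      · exact ⟨hpΩ, h⟩
  have hAclosed : IsClosed A := by rw [hAeq]; exact hclosed.sdiff hV
  have hBclosed : IsClosed B := by rw [hBeq]; exact hclosed.sdiff hU
  have hAcomp : IsCompact A := hΩcomp.of_isClosed_subset hAclosed Set.inter_subset_left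
  have hdisj : Disjoint A B := by
    rw [Set.disjoint_left]
    rintro p ⟨hpΩ, hpU⟩ ⟨_, hpV⟩
    exact hmemUV p hpΩ hpU hpV
  obtain ⟨δ, hδ, hthick⟩ := hdisj.exists_thickenings hAcomp hBclosed
  have hAB : Ω = A ∪ B := by
    ext p
    constructor
    · intro hpΩ
      rcases hUV hpΩ with h | h
      · exact Or.inl ⟨hpΩ, h⟩
      · exact Or.inr ⟨hpΩ, h⟩
    · rintro (⟨h, _⟩ | ⟨h, _⟩) <;> exact h
  have hev1 : ∀ᶠ k in atTop, dist (x (k+1)) (x k) < δ/2 :=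
    hstep.eventually_lt_const (half_pos hδ)
  have hev2 : ∀ᶠ k in atTop,
      x k ∈ Metric.thickening (δ/2) A ∪ Metric.thickening (δ/2) B := by
    filter_upwards [hnear (δ/2) (half_pos hδ)] with k hk
    obtain ⟨p, hpΩ, hpd⟩ := hk
    rw [hAB] at hpΩ
    rcases hpΩ with h | h
    · exact Or.inl (Metric.mem_thickening_iff.mpr ⟨p, h, hpd⟩)
    · exact Or.inr (Metric.mem_thickening_iff.mpr ⟨p, h, hpd⟩)
  obtain ⟨a, haΩ, haU⟩ := hUne
  obtain ⟨b, hbΩ, hbV⟩ := hVne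
  have hfreqA : ∃ᶠ k in atTop, x k ∈ Metric.thickening (δ/2) A := by
    have h := mapClusterPt_iff_frequently.mp haΩ (Metric.ball a (δ/2))
      (Metric.ball_mem_nhds _ (half_pos hδ))
    apply h.mono
    intro k hk
    exact Metric.mem_thickening_iff.mpr ⟨a, ⟨haΩ, haU⟩, Metric.mem_ball.mp hk⟩
  have hfreqB : ∃ᶠ k in atTop, x k ∈ Metric.thickening (δ/2) B := by
    have h := mapClusterPt_iff_frequently.mp hbΩ (Metric.ball b (δ/2))
      (Metric.ball_mem_nhds _ (half_pos hδ))
    apply h.mono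
    intro k hk
    exact Metric.mem_thickening_iff.mpr ⟨b, ⟨hbΩ, hbV⟩, Metric.mem_ball.mp hk⟩
  obtain ⟨N, hN⟩ := Filter.eventually_atTop.mp (hev1.and hev2)
  obtain ⟨k₁, hk₁N, hk₁⟩ := Filter.frequently_atTop.mp hfreqA N
  have hind : ∀ m, x (k₁ + m) ∈ Metric.thickening (δ/2) A := by
    intro m
    induction m with
    | zero => simpa using hk₁
    | succ m ih =>
      have hstep' := (hN (k₁+m) (le_trans hk₁N (Nat.le_add_right _ _))).1
      have hmem := (hN (k₁+m+1) (by omega)).2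
      have heq : k₁ + (m+1) = (k₁ + m) + 1 := by omega
      rw [heq]
      rcases hmem with h | h
      · exact h
      · exfalso
        obtain ⟨p, hpA, hpd⟩ := Metric.mem_thickening_iff.mp ih
        have hA' : x ((k₁+m)+1) ∈ Metric.thickening δ A := by
          refine Metric.mem_thickening_iff.mpr ⟨p, hpA, ?_⟩
          calc dist (x ((k₁+m)+1)) p ≤ dist (x ((k₁+m)+1)) (x (k₁+m)) + dist (x (k₁+m)) p :=
                dist_triangle _ _ _
            _ < δ/2 + δ/2 := add_lt_add hstep' hpd
            _ = δ := add_halves δ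
        have hB' : x ((k₁+m)+1) ∈ Metric.thickening δ B :=
          Metric.thickening_mono (half_le_self hδ.le) B h
        exact Set.disjoint_left.mp hthick hA' hB'
  obtain ⟨k₂, hk₂ge, hk₂⟩ := Filter.frequently_atTop.mp hfreqB k₁
  have hxk₂ : x k₂ ∈ Metric.thickening (δ/2) A := by
    have h := hind (k₂ - k₁)
    rwa [Nat.add_sub_cancel' hk₂ge] at h
  exact Set.disjoint_left.mp hthick
    (Metric.thickening_mono (half_le_self hδ.le) A hxk₂)
    (Metric.thickening_mono (half_le_self hδ.le) B hk₂)

end MMAux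

set_option maxHeartbeats 1000000 in
/-- For the Armijo-safeguarded quasi-Newton iteration, (i) `‖∇f(x_k)‖ → 0`,
(ii) `‖x_{k+1} − x_k‖ → 0`, (iii) every limit point of `(x_k)` is a stationary point of `f`,
and (iv) the set of limit points is compact and connected. -/
theorem mm_iterates_converge_to_stationary_points {n : ℕ}
    (f : EuclideanSpace ℝ (Fin n) → ℝ)
    (f' : EuclideanSpace ℝ (Fin n) → EuclideanSpace ℝ (Fin n))
    (hf : ∀ x, HasGradientAt f (f' x) x)
    (L : NNReal) (hlip : LipschitzWith L f')
    (hcoercive : ∀ t : ℝ, IsCompact {x : EuclideanSpace ℝ (Fin n) | f x ≤ t})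
    (H : EuclideanSpace ℝ (Fin n) → Matrix (Fin n) (Fin n) ℝ)
    (hHcont : Continuous H) (hHpd : ∀ x, (H x).PosDef)
    (α : ℝ) (hα : α ∈ Set.Ioo (0:ℝ) 1)
    (σ : ℝ) (hσ : σ ∈ Set.Ioo (0:ℝ) 1)
    (x₀ : EuclideanSpace ℝ (Fin n))
    (x v : ℕ → EuclideanSpace ℝ (Fin n)) (s : ℕ → ℕ)
    (hx0 : x 0 = x₀)
    (hv : ∀ k, ∀ i, v k i = -((H (x k))⁻¹.mulVec (fun j => f' (x k) j) i))
    (hs : ∀ k, IsLeast {m : ℕ |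
      f (x k + σ^m • v k) ≤ f (x k) + α * σ^m * ⟪f' (x k), v k⟫} (s k))
    (hrec : ∀ k, x (k + 1) = x k + σ^(s k) • v k) :
    Tendsto (fun k => ‖f' (x k)‖) atTop (nhds 0)
    ∧ Tendsto (fun k => ‖x (k + 1) - x k‖) atTop (nhds 0)
    ∧ (∀ p, MapClusterPt p atTop x → f' p = 0)
    ∧ IsCompact {p | MapClusterPt p atTop x}
    ∧ IsConnected {p | MapClusterPt p atTop x} := by
  classical
  obtain ⟨hα0, hα1⟩ := hα
  obtain ⟨hσ0, hσ1⟩ := hσ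
  -- continuity of the inverse matrix field
  have hGpd : ∀ y, ((H y)⁻¹).PosDef := fun y => (hHpd y).inv
  have hGcont : Continuous fun y => (H y)⁻¹ := by
    have h1 : Continuous fun y => (H y).det := hHcont.matrix_det
    have h2 : Continuous fun y => ((H y).det)⁻¹ :=
      h1.inv₀ (fun y => (hHpd y).det_pos.ne')
    have h3 : Continuous fun y => ((H y).det)⁻¹ • (H y).adjugate :=
      h2.smul hHcont.matrix_adjugate
    have heq : (fun y => (H y)⁻¹) = fun y => ((H y).det)⁻¹ • (H y).adjugate := by
      funext y
      rw [Matrix.inv_def, Ring.inverse_eq_inv]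
    rwa [heq]
  -- the explicit form of v
  have hveq : ∀ k, v k = MMAux.toE (-((H (x k))⁻¹.mulVec (MMAux.ofE (f' (x k))))) := by
    intro k
    have h1 : MMAux.ofE (v k) = -((H (x k))⁻¹.mulVec (MMAux.ofE (f' (x k)))) :=
      funext fun i => hv k i
    rw [← h1, MMAux.toE_ofE]
  set q : ℕ → ℝ := fun k => MMAux.ofE (f' (x k)) ⬝ᵥ (H (x k))⁻¹.mulVec (MMAux.ofE (f' (x k)))
    with hqdef
  clear_value q
  have hinner : ∀ k, ⟪f' (x k), v k⟫ = -(q k) := by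
    intro k
    calc ⟪f' (x k), v k⟫
        = ⟪MMAux.toE (MMAux.ofE (f' (x k))),
            MMAux.toE (-((H (x k))⁻¹.mulVec (MMAux.ofE (f' (x k)))))⟫ := by
          rw [MMAux.toE_ofE, hveq k]
      _ = MMAux.ofE (f' (x k)) ⬝ᵥ -((H (x k))⁻¹.mulVec (MMAux.ofE (f' (x k)))) :=
          MMAux.inner_toE _ _
      _ = -(q k) := by rw [dotProduct_neg, hqdef]
  have hq_nonneg : ∀ k, 0 ≤ q k := by
    intro k
    have := (hGpd (x k)).posSemidef.re_dotProduct_nonneg (MMAux.ofE (f' (x k)))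
    simpa [hqdef] using this
  -- Armijo decrease
  have harm : ∀ k, f (x (k+1)) ≤ f (x k) - α * σ^(s k) * q k := by
    intro k
    have h1 := (hs k).1
    rw [hrec k]
    calc f (x k + σ^(s k) • v k) ≤ f (x k) + α * σ^(s k) * ⟪f' (x k), v k⟫ := h1
      _ = f (x k) - α * σ^(s k) * q k := by rw [hinner k]; ring
  have hdec : ∀ k, f (x (k+1)) ≤ f (x k) := by
    intro k
    have h1 := mul_nonneg (mul_nonneg hα0.le (pow_nonneg hσ0.le (s k))) (hq_nonneg k)
    linarith [harm k]
  have hanti : Antitone fun k => f (x k) := antitone_nat_of_succ_le hdec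
  set K : Set (EuclideanSpace ℝ (Fin n)) := {y | f y ≤ f x₀} with hKdef
  have hKcomp : IsCompact K := hcoercive (f x₀)
  have hxK : ∀ k, x k ∈ K := by
    intro k
    have : f (x k) ≤ f (x 0) := hanti (Nat.zero_le k)
    rw [hx0] at this
    exact this
  have hfc : Continuous f :=
    continuous_iff_continuousAt.mpr fun z => (hf z).differentiableAt.continuousAt
  obtain ⟨z₀, hz₀K, hz₀min⟩ := hKcomp.exists_isMinOn ⟨x₀, le_refl (f x₀)⟩ hfc.continuousOn
  have hlb : ∀ k, f z₀ ≤ f (x k) := fun k => isMinOn_iff.mp hz₀min _ (hxK k)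
  have hbdd : BddBelow (Set.range fun k => f (x k)) := by
    refine ⟨f z₀, ?_⟩
    rintro _ ⟨k, rfl⟩
    exact hlb k
  have hftend : Tendsto (fun k => f (x k)) atTop (nhds (⨅ k, f (x k))) :=
    tendsto_atTop_ciInf hanti hbdd
  have hdiff0 : Tendsto (fun k => f (x k) - f (x (k+1))) atTop (nhds 0) := by
    have h2 : Tendsto (fun k => f (x (k+1))) atTop (nhds (⨅ k, f (x k))) :=
      hftend.comp (tendsto_add_atTop_nat 1)
    simpa using hftend.sub h2
  -- uniform bounds
  obtain ⟨c, hc, C, hC, hbnd⟩ := MMAux.uniform_bounds hKcomp (fun y => (H y)⁻¹) hGcont hGpd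
  have hqlow : ∀ k, c * ‖f' (x k)‖^2 ≤ q k := by
    intro k
    have h0 := (hbnd (x k) (hxK k) (MMAux.ofE (f' (x k)))).1
    rw [MMAux.toE_ofE] at h0
    simp only [hqdef]
    exact h0
  have hvbound : ∀ k, ‖v k‖ ≤ C * ‖f' (x k)‖ := by
    intro k
    have h1 := (hbnd (x k) (hxK k) (MMAux.ofE (f' (x k)))).2
    rw [MMAux.toE_ofE] at h1
    have h2 : ‖v k‖ = ‖MMAux.toE ((H (x k))⁻¹.mulVec (MMAux.ofE (f' (x k))))‖ := by
      rw [hveq k, MMAux.toE_neg, norm_neg]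
    rw [h2]
    exact h1
  -- step size lower bound
  set ρ : ℝ := (1-α) * c / (((L:ℝ)+1) * C^2) with hρdef
  clear_value ρ
  have hρ : 0 < ρ := by
    rw [hρdef]
    apply div_pos
    · nlinarith
    · positivity
  set τ : ℝ := α * c * min 1 (σ * ρ) with hτdef
  clear_value τ
  have hτ : 0 < τ := by
    rw [hτdef]
    apply mul_pos (mul_pos hα0 hc)
    exact lt_min one_pos (mul_pos hσ0 hρ)
  have hkey : ∀ k, τ * ‖f' (x k)‖^2 ≤ α * σ^(s k) * q k := by
    intro k
    by_cases hg : f' (x k) = 0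
    · rw [hg]
      simp only [norm_zero]
      have := mul_nonneg (mul_nonneg hα0.le (pow_nonneg hσ0.le (s k))) (hq_nonneg k)
      nlinarith
    · have hgn : 0 < ‖f' (x k)‖ := norm_pos_iff.2 hg
      have hq := hqlow k
      have hvb := hvbound k
      have hvs : ‖v k‖^2 ≤ C^2 * ‖f' (x k)‖^2 := by
        have := pow_le_pow_left₀ (norm_nonneg (v k)) hvb 2
        rwa [mul_pow] at this
      cases hsk : s k with
      | zero =>
        have h1 : τ ≤ α * c := by
          have h2 := min_le_left (1:ℝ) (σ * ρ)
          have h3 := mul_le_mul_of_nonneg_left h2 (mul_pos hα0 hc).le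
          rw [hτdef]
          linarith
        have e1 : τ * ‖f' (x k)‖^2 ≤ (α * c) * ‖f' (x k)‖^2 :=
          mul_le_mul_of_nonneg_right h1 (sq_nonneg _)
        have e2 : α * (c * ‖f' (x k)‖^2) ≤ α * q k :=
          mul_le_mul_of_nonneg_left hq hα0.le
        rw [pow_zero]
        linarith
      | succ m =>
        have hsm : 0 < σ^m := pow_pos hσ0 m
        have hnotin : f (x k) + α * σ^m * ⟪f' (x k), v k⟫ < f (x k + σ^m • v k) := by
          by_contra hle
          push_neg at hle
          have hmem : m ∈ {m : ℕ |
              f (x k + σ^m • v k) ≤ f (x k) + α * σ^m * ⟪f' (x k), v k⟫} := hle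
          have := (hs k).2 hmem
          omega
        have hdes := MMAux.descent f f' hf L hlip (x k) (σ^m • v k)
        rw [real_inner_smul_right] at hdes
        have hnorm2 : ‖σ^m • v k‖^2 = (σ^m)^2 * ‖v k‖^2 := by
          rw [norm_smul, Real.norm_eq_abs, abs_of_nonneg hsm.le, mul_pow]
        rw [hnorm2] at hdes
        rw [hinner k] at hnotin hdes
        -- (1-α) q < (L+1) σ^m ‖v‖²
        have hA : ((1-α) * q k) * σ^m < ((((L:ℝ)+1) * σ^m) * ‖v k‖^2) * σ^m := by
          have e0 : (0:ℝ) ≤ (σ^m)^2 * ‖v k‖^2 :=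
            mul_nonneg (sq_nonneg (σ^m)) (sq_nonneg ‖v k‖)
          nlinarith [hnotin, hdes, e0]
        have h4 : (1-α) * q k < (((L:ℝ)+1) * σ^m) * ‖v k‖^2 :=
          lt_of_mul_lt_mul_right hA hsm.le
        have h4b : ((1-α) * c) * ‖f' (x k)‖^2 < ((((L:ℝ)+1) * C^2) * σ^m) * ‖f' (x k)‖^2 := by
          have e1 : (1-α) * (c * ‖f' (x k)‖^2) ≤ (1-α) * q k :=
            mul_le_mul_of_nonneg_left hq (by linarith)
          have e2 : (((L:ℝ)+1) * σ^m) * ‖v k‖^2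
              ≤ (((L:ℝ)+1) * σ^m) * (C^2 * ‖f' (x k)‖^2) := by
            apply mul_le_mul_of_nonneg_left hvs
            positivity
          nlinarith [e1, e2, h4]
        have h4c : (1-α) * c < (((L:ℝ)+1) * C^2) * σ^m :=
          lt_of_mul_lt_mul_right h4b (sq_nonneg ‖f' (x k)‖)
        have h5 : ρ < σ^m := by
          rw [hρdef, div_lt_iff₀ (by positivity : (0:ℝ) < ((L:ℝ)+1) * C^2)]
          nlinarith [h4c]
        have h6 : σ * ρ ≤ σ^(m+1) := by
          rw [pow_succ]
          have := mul_le_mul_of_nonneg_right h5.le hσ0.le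
          linarith
        have h7 : τ ≤ α * c * (σ * ρ) := by
          have h8 := min_le_right (1:ℝ) (σ * ρ)
          have h9 := mul_le_mul_of_nonneg_left h8 (mul_pos hα0 hc).le
          rw [hτdef]
          linarith
        have h9 : α * c * (σ * ρ) * ‖f' (x k)‖^2 ≤ α * σ^(m+1) * q k := by
          have e3 : (σ*ρ) * (c * ‖f' (x k)‖^2) ≤ σ^(m+1) * (c * ‖f' (x k)‖^2) := by
            apply mul_le_mul_of_nonneg_right h6
            positivity
          have e4 : σ^(m+1) * (c * ‖f' (x k)‖^2) ≤ σ^(m+1) * q k :=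
            mul_le_mul_of_nonneg_left hq (pow_nonneg hσ0.le _)
          have e5 := mul_le_mul_of_nonneg_left (e3.trans e4) hα0.le
          nlinarith [e5]
        calc τ * ‖f' (x k)‖^2 ≤ α * c * (σ * ρ) * ‖f' (x k)‖^2 :=
              mul_le_mul_of_nonneg_right h7 (sq_nonneg _)
          _ ≤ α * σ^(m+1) * q k := h9
  -- (i)
  have hub : ∀ k, ‖f' (x k)‖^2 ≤ (f (x k) - f (x (k+1))) * τ⁻¹ := by
    intro k
    have h1 : τ * ‖f' (x k)‖^2 ≤ f (x k) - f (x (k+1)) :=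
      le_trans (hkey k) (by linarith [harm k])
    have h2 : τ * ‖f' (x k)‖^2 * τ⁻¹ ≤ (f (x k) - f (x (k+1))) * τ⁻¹ :=
      mul_le_mul_of_nonneg_right h1 (inv_nonneg.2 hτ.le)
    rwa [mul_comm τ _, mul_assoc, mul_inv_cancel₀ hτ.ne', mul_one] at h2
  have hsq0 : Tendsto (fun k => ‖f' (x k)‖^2) atTop (nhds 0) := by
    have htail : Tendsto (fun k => (f (x k) - f (x (k+1))) * τ⁻¹) atTop (nhds 0) := by
      simpa using hdiff0.mul_const τ⁻¹
    exact squeeze_zero (fun k => sq_nonneg _) hub htail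
  have conc1 : Tendsto (fun k => ‖f' (x k)‖) atTop (nhds 0) := by
    have h := (Real.continuous_sqrt.tendsto 0).comp hsq0
    rw [Real.sqrt_zero] at h
    exact h.congr fun k => Real.sqrt_sq (norm_nonneg _)
  have conc2 : Tendsto (fun k => ‖x (k + 1) - x k‖) atTop (nhds 0) := by
    have hCg : Tendsto (fun k => C * ‖f' (x k)‖) atTop (nhds 0) := by
      simpa using conc1.const_mul C
    refine squeeze_zero (fun k => norm_nonneg _) (fun k => ?_) hCg
    rw [hrec k, add_sub_cancel_left, norm_smul, Real.norm_eq_abs,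
      abs_of_nonneg (pow_nonneg hσ0.le _)]
    calc σ^(s k) * ‖v k‖ ≤ 1 * ‖v k‖ :=
          mul_le_mul_of_nonneg_right (pow_le_one₀ hσ0.le hσ1.le) (norm_nonneg _)
      _ = ‖v k‖ := one_mul _
      _ ≤ C * ‖f' (x k)‖ := hvbound k
  have conc3 : ∀ p, MapClusterPt p atTop x → f' p = 0 := by
    intro p hp
    rw [← norm_le_zero_iff]
    apply le_of_forall_pos_le_add
    intro ε hε
    have hev : ∀ᶠ k in atTop, ‖f' (x k)‖ < ε/2 := conc1.eventually_lt_const (half_pos hε)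
    have hfreq := mapClusterPt_iff_frequently.mp hp (Metric.ball p (ε/(2*((L:ℝ)+1))))
      (Metric.ball_mem_nhds _ (by positivity))
    obtain ⟨k, hk1, hk2⟩ := (hfreq.and_eventually hev).exists
    have hlip' : ‖f' p - f' (x k)‖ ≤ (L:ℝ) * dist p (x k) := by
      have := hlip.dist_le_mul p (x k)
      rwa [dist_eq_norm] at this
    have hd : dist p (x k) < ε/(2*((L:ℝ)+1)) := by
      have := Metric.mem_ball.mp hk1
      rwa [dist_comm] at this
    have h1 : (L:ℝ) * dist p (x k) ≤ ((L:ℝ)+1) * dist p (x k) :=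
      mul_le_mul_of_nonneg_right (by linarith [L.coe_nonneg]) dist_nonneg
    have h2 : ((L:ℝ)+1) * dist p (x k) ≤ ((L:ℝ)+1) * (ε/(2*((L:ℝ)+1))) :=
      mul_le_mul_of_nonneg_left hd.le (by positivity)
    have h3 : ((L:ℝ)+1) * (ε/(2*((L:ℝ)+1))) = ε/2 := by
      field_simp
    linarith [norm_sub_norm_le (f' p) (f' (x k))]
  have hdist0 : Tendsto (fun k => dist (x (k+1)) (x k)) atTop (nhds 0) := by
    simpa [dist_eq_norm] using conc2
  obtain ⟨hcomp, hconn⟩ := MMAux.clusterSet_compact_connected hKcomp x hxK hdist0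
  exact ⟨conc1, conc2, conc3, hcomp, hconn⟩
end

section
/- Let f : ℝⁿ → ℝ be differentiable with L-Lipschitz gradient, let α, σ ∈ (0,1), and for (x, v) ∈ ℝⁿ × ℝⁿ define the set S(x, v) = { x + σᵏ v : k a nonnegative integer with f(x + σᵏ v) ≤ f(x) + α σᵏ ⟨∇f(x), v⟩ }. Suppose x_j → x and v_j → v with v ≠ 0, and y_j ∈ S(x_j, v_j) with y_j → y and y ≠ x. Then y ∈ S(x, v). -/
open scoped RealInnerProductSpace
open Filter

/-- The Armijo step point-to-set map
`S(x, v) = {x + σᵏ v : k ∈ ℕ, f(x + σᵏ v) ≤ f(x) + ασᵏ⟨∇f(x), v⟩}` is closed at `(x, v)` with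
`v ≠ 0`, along sequences whose images converge to a point `y ≠ x`. -/
theorem armijo_map_closed {n : ℕ}
    (f : EuclideanSpace ℝ (Fin n) → ℝ)
    (f' : EuclideanSpace ℝ (Fin n) → EuclideanSpace ℝ (Fin n))
    (hf : ∀ z, HasGradientAt f (f' z) z)
    (L : NNReal) (hlip : LipschitzWith L f')
    (α : ℝ) (hα : α ∈ Set.Ioo (0:ℝ) 1)
    (σ : ℝ) (hσ : σ ∈ Set.Ioo (0:ℝ) 1)
    (xs vs ys : ℕ → EuclideanSpace ℝ (Fin n))
    (x v y : EuclideanSpace ℝ (Fin n))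
    (hxs : Tendsto xs atTop (nhds x))
    (hvs : Tendsto vs atTop (nhds v))
    (hys : Tendsto ys atTop (nhds y))
    (hvne : v ≠ 0) (hyne : y ≠ x)
    (hmem : ∀ j, ∃ k : ℕ, ys j = xs j + σ^k • vs j ∧
      f (xs j + σ^k • vs j) ≤ f (xs j) + α * σ^k * ⟪f' (xs j), vs j⟫) :
    ∃ k : ℕ, y = x + σ^k • v ∧
      f (x + σ^k • v) ≤ f x + α * σ^k * ⟪f' x, v⟫ := by
  choose k hk1 hk2 using hmem
  have hσ0 := hσ.1
  have hσ1 := hσ.2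
  have hvnorm : (0:ℝ) < ‖v‖ := norm_pos_iff.mpr hvne
  have hwnorm : (0:ℝ) < ‖y - x‖ := by
    rw [norm_pos_iff, sub_ne_zero]; exact hyne
  set t : ℝ := ‖y - x‖ / ‖v‖ with ht
  have ht0 : 0 < t := div_pos hwnorm hvnorm
  -- eventually vs j ≠ 0
  have hvsnorm : Tendsto (fun j => ‖vs j‖) atTop (nhds ‖v‖) := hvs.norm
  have hvs_pos : ∀ᶠ j in atTop, (0:ℝ) < ‖vs j‖ := hvsnorm.eventually_const_lt hvnorm
  -- σ^(k j) tends to t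
  have hratio : Tendsto (fun j => ‖ys j - xs j‖ / ‖vs j‖) atTop (nhds t) := by
    exact ((hys.sub hxs).norm.div hvsnorm hvnorm.ne')
  have heq : ∀ᶠ j in atTop, σ ^ (k j) = ‖ys j - xs j‖ / ‖vs j‖ := by
    filter_upwards [hvs_pos] with j hj
    have : ys j - xs j = σ ^ (k j) • vs j := by rw [hk1 j]; abel
    rw [this, norm_smul, Real.norm_eq_abs, abs_of_pos (pow_pos hσ0 _),
      mul_div_assoc, div_self hj.ne', mul_one]
  have hpow : Tendsto (fun j => σ ^ (k j)) atTop (nhds t) :=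
    hratio.congr' (heq.mono fun j hj => hj.symm)
  -- k j is eventually bounded
  obtain ⟨N, hN⟩ : ∃ N : ℕ, σ ^ N < t := exists_pow_lt_of_lt_one ht0 hσ1
  have hanti : StrictAnti (fun m : ℕ => σ ^ m) := fun a b h => pow_lt_pow_right_of_lt_one₀ hσ0 hσ1 h
  have hbdd : ∀ᶠ j in atTop, k j < N := by
    filter_upwards [hpow.eventually_const_lt hN] with j hj
    exact hanti.lt_iff_gt.mp hj
  -- pigeonhole: some K occurs frequently
  have hfreq : ∃ K : ℕ, ∃ᶠ j in atTop, k j = K := by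
    by_contra h
    push_neg at h
    have hall : ∀ K : ℕ, ∀ᶠ j in atTop, k j ≠ K := by
      intro K
      have := h K
      exact this
    have : ∀ᶠ j in atTop, ∀ K ∈ Finset.range N, k j ≠ K :=
      Filter.eventually_all_finset _ |>.mpr fun K _ => hall K
    obtain ⟨j, hj1, hj2⟩ := (this.and hbdd).exists
    exact hj1 (k j) (Finset.mem_range.mpr hj2) rfl
  obtain ⟨K, hK⟩ := hfreq
  obtain ⟨φ, hφ, hφK⟩ := Filter.extraction_of_frequently_atTop hK
  have hφt : Tendsto φ atTop atTop := hφ.tendsto_atTop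
  -- limits along the subsequence
  have hxsφ : Tendsto (xs ∘ φ) atTop (nhds x) := hxs.comp hφt
  have hvsφ : Tendsto (vs ∘ φ) atTop (nhds v) := hvs.comp hφt
  have hysφ : Tendsto (ys ∘ φ) atTop (nhds y) := hys.comp hφt
  have hsum : Tendsto (fun i => xs (φ i) + σ ^ K • vs (φ i)) atTop
      (nhds (x + σ ^ K • v)) := hxsφ.add (hvsφ.const_smul _)
  have hysφ' : Tendsto (fun i => xs (φ i) + σ ^ K • vs (φ i)) atTop (nhds y) := by
    refine hysφ.congr fun i => ?_
    simp only [Function.comp]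
    rw [hk1 (φ i), hφK i]
  have hy : y = x + σ ^ K • v := tendsto_nhds_unique hysφ' hsum
  refine ⟨K, hy, ?_⟩
  -- continuity
  have hfc : Continuous f := by
    apply continuous_iff_continuousAt.mpr
    intro z
    exact (hf z).hasFDerivAt.differentiableAt.continuousAt
  have hf'c : Continuous f' := hlip.continuous
  have hlhs : Tendsto (fun i => f (xs (φ i) + σ ^ K • vs (φ i))) atTop
      (nhds (f (x + σ ^ K • v))) := (hfc.tendsto _).comp hsum
  have hrhs : Tendsto (fun i => f (xs (φ i)) + α * σ ^ K * ⟪f' (xs (φ i)), vs (φ i)⟫)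
      atTop (nhds (f x + α * σ ^ K * ⟪f' x, v⟫)) := by
    refine ((hfc.tendsto _).comp hxsφ).add (Tendsto.const_mul _ ?_)
    exact Tendsto.inner (((hf'c.tendsto _).comp hxsφ)) hvsφ
  refine le_of_tendsto_of_tendsto' hlhs hrhs fun i => ?_
  have := hk2 (φ i)
  rwa [hφK i] at this
end

section
/- Let f : ℝⁿ → ℝ be differentiable and coercive with L-Lipschitz gradient, let H : ℝⁿ → ℝ^{n×n} be a continuous map into the symmetric positive definite matrices, and fix α, σ ∈ (0,1). Let ψ(x) = x + σ^{s_x} v_x be the Armijo-safeguarded update, where v_x = −H(x)⁻¹∇f(x) and s_x is the smallest nonnegative integer s with f(x + σˢ v_x) ≤ f(x) + α σˢ ⟨∇f(x), v_x⟩. Let φ : ℝⁿ → ℝⁿ be any map satisfying f(φ(x)) ≤ f(ψ(ψ(x))) for all x (the modified quasi-Newton acceleration with fallback). Then every limit point of the iterate sequence x_{k+1} = φ(x_k) is a stationary point of f. -/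
open scoped RealInnerProductSpace
open Matrix Filter

lemma descent_aux {n : ℕ}
    (f : EuclideanSpace ℝ (Fin n) → ℝ)
    (f' : EuclideanSpace ℝ (Fin n) → EuclideanSpace ℝ (Fin n))
    (hf : ∀ z, HasGradientAt f (f' z) z)
    (C : ℝ) (hlip : ∀ a b, ‖f' a - f' b‖ ≤ C * ‖a - b‖)
    (z w : EuclideanSpace ℝ (Fin n)) :
    f (z + w) ≤ f z + ⟪f' z, w⟫ + C / 2 * ‖w‖ ^ 2 := by
  have hc : ∀ t : ℝ, HasDerivAt (fun t : ℝ => z + t • w) w t := by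
    intro t
    simpa using ((hasDerivAt_id t).smul_const w).const_add z
  have hcomp : ∀ t : ℝ, HasDerivAt (fun t : ℝ => f (z + t • w)) ⟪f' (z + t • w), w⟫ t := by
    intro t
    have h1 : HasDerivAt (fun t : ℝ => f (z + t • w)) _ t := (hasGradientAt_iff_hasFDerivAt.1 (hf (z + t • w))).comp_hasDerivAt t (hc t)
    simpa [Function.comp, InnerProductSpace.toDual_apply_apply, PiLp.inner_apply, conj_trivial]
      using h1
  have hh : ∀ t : ℝ, HasDerivAt
      (fun t => f (z + t • w) - t * ⟪f' z, w⟫ - C * ‖w‖ ^ 2 / 2 * t ^ 2)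
      (⟪f' (z + t • w), w⟫ - ⟪f' z, w⟫ - C * ‖w‖ ^ 2 * t) t := by
    intro t
    have h2 : HasDerivAt (fun t : ℝ => t * ⟪f' z, w⟫) ⟪f' z, w⟫ t := hasDerivAt_mul_const _
    have h3 : HasDerivAt (fun t : ℝ => C * ‖w‖ ^ 2 / 2 * t ^ 2) (C * ‖w‖ ^ 2 * t) t := by
      have := (hasDerivAt_pow 2 t).const_mul (C * ‖w‖ ^ 2 / 2)
      refine this.congr_deriv ?_
      ring
    exact ((hcomp t).sub h2).sub h3
  have hderiv_le : ∀ t ∈ Set.Ioo (0:ℝ) 1,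
      deriv (fun t => f (z + t • w) - t * ⟪f' z, w⟫ - C * ‖w‖ ^ 2 / 2 * t ^ 2) t ≤ 0 := by
    intro t ht
    rw [(hh t).deriv]
    have h4 : ⟪f' (z + t • w), w⟫ - ⟪f' z, w⟫ = ⟪f' (z + t • w) - f' z, w⟫ := by
      rw [inner_sub_left]
    have h5 : ⟪f' (z + t • w) - f' z, w⟫ ≤ ‖f' (z + t • w) - f' z‖ * ‖w‖ :=
      real_inner_le_norm _ _
    have h6 : ‖f' (z + t • w) - f' z‖ ≤ C * ‖t • w‖ := by
      have := hlip (z + t • w) z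
      simpa using this
    have h7 : ‖t • w‖ = t * ‖w‖ := by
      rw [norm_smul, Real.norm_eq_abs, abs_of_pos ht.1]
    have hw0 : (0:ℝ) ≤ ‖w‖ := norm_nonneg _
    have h8 : ‖f' (z + t • w) - f' z‖ * ‖w‖ ≤ C * ‖w‖ ^ 2 * t := by
      rw [h7] at h6
      nlinarith [mul_le_mul_of_nonneg_right h6 hw0]
    rw [h4]
    linarith [h5.trans h8]
  have hcont : ContinuousOn (fun t => f (z + t • w) - t * ⟪f' z, w⟫ - C * ‖w‖ ^ 2 / 2 * t ^ 2)
      (Set.Icc (0:ℝ) 1) := fun t _ => ((hh t).continuousAt).continuousWithinAt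
  have hdiff : DifferentiableOn ℝ
      (fun t => f (z + t • w) - t * ⟪f' z, w⟫ - C * ‖w‖ ^ 2 / 2 * t ^ 2)
      (interior (Set.Icc (0:ℝ) 1)) :=
    fun t _ => ((hh t).differentiableAt).differentiableWithinAt
  have hanti := antitoneOn_of_deriv_nonpos (convex_Icc (0:ℝ) 1) hcont hdiff
    (by rwa [interior_Icc])
  have h10 := hanti (Set.left_mem_Icc.2 zero_le_one) (Set.right_mem_Icc.2 zero_le_one)
    zero_le_one
  simp only [zero_smul, add_zero, one_smul, mul_zero, zero_mul, sub_zero] at h10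
  nlinarith [h10]


/-- If `ψ` is the Armijo-safeguarded quasi-Newton update and `φ` is any map with
`f(φ(x)) ≤ f(ψ(ψ(x)))` (the modified quasi-Newton acceleration with fallback), then every limit
point of the iterate sequence `x_{k+1} = φ(x_k)` is a stationary point of `f`. -/
theorem accelerated_mm_limit_points_stationary {n : ℕ}
    (f : EuclideanSpace ℝ (Fin n) → ℝ)
    (f' : EuclideanSpace ℝ (Fin n) → EuclideanSpace ℝ (Fin n))
    (hf : ∀ z, HasGradientAt f (f' z) z)
    (L : NNReal) (hlip : LipschitzWith L f')
    (hcoercive : ∀ t : ℝ, IsCompact {z : EuclideanSpace ℝ (Fin n) | f z ≤ t})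
    (H : EuclideanSpace ℝ (Fin n) → Matrix (Fin n) (Fin n) ℝ)
    (hHcont : Continuous H) (hHpd : ∀ z, (H z).PosDef)
    (α : ℝ) (hα : α ∈ Set.Ioo (0:ℝ) 1)
    (σ : ℝ) (hσ : σ ∈ Set.Ioo (0:ℝ) 1)
    (vmap : EuclideanSpace ℝ (Fin n) → EuclideanSpace ℝ (Fin n))
    (hvmap : ∀ z, ∀ i, vmap z i = -((H z)⁻¹.mulVec (fun j => f' z j) i))
    (smap : EuclideanSpace ℝ (Fin n) → ℕ)
    (hsmap : ∀ z, IsLeast {m : ℕ |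
      f (z + σ^m • vmap z) ≤ f z + α * σ^m * ⟪f' z, vmap z⟫} (smap z))
    (ψ : EuclideanSpace ℝ (Fin n) → EuclideanSpace ℝ (Fin n))
    (hψ : ∀ z, ψ z = z + σ^(smap z) • vmap z)
    (φ : EuclideanSpace ℝ (Fin n) → EuclideanSpace ℝ (Fin n))
    (hφ : ∀ z, f (φ z) ≤ f (ψ (ψ z)))
    (x : ℕ → EuclideanSpace ℝ (Fin n))
    (hrec : ∀ k, x (k + 1) = φ (x k)) :
    ∀ p, MapClusterPt p atTop x → f' p = 0 := by
  intro p hp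
  by_contra hgp
  -- basic scalar quantities
  set w0 : EuclideanSpace ℝ (Fin n) → (Fin n → ℝ) :=
    fun z => (H z)⁻¹ *ᵥ (fun j => f' z j) with hw0_def
  -- inner product formula
  have hq_eq : ∀ z, (⟪f' z, vmap z⟫ : ℝ) = -(∑ i, f' z i * w0 z i) := by
    intro z
    rw [PiLp.inner_apply]
    simp only [RCLike.inner_apply, conj_trivial]
    rw [← Finset.sum_neg_distrib]
    apply Finset.sum_congr rfl
    intro i _
    rw [hvmap z i]
    ring
  -- nonpositivity of the directional derivative
  have hq_nonpos : ∀ z, (⟪f' z, vmap z⟫ : ℝ) ≤ 0 := by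
    intro z
    rw [hq_eq]
    have h1 := ((hHpd z).inv.posSemidef).dotProduct_mulVec_nonneg (fun j => f' z j)
    simp only [dotProduct, Pi.star_apply, star_trivial] at h1
    linarith
  -- monotone decrease of ψ
  have hψ_le : ∀ z, f (ψ z) ≤ f z := by
    intro z
    have h1 : f (z + σ ^ (smap z) • vmap z) ≤ f z + α * σ ^ (smap z) * ⟪f' z, vmap z⟫ :=
      (hsmap z).1
    rw [hψ z]
    have hpow : (0:ℝ) < σ ^ (smap z) := pow_pos hσ.1 _
    have h2 : α * σ ^ (smap z) * ⟪f' z, vmap z⟫ ≤ 0 :=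
      mul_nonpos_of_nonneg_of_nonpos (mul_pos hα.1 hpow).le (hq_nonpos z)
    linarith [h1]
  -- the value sequence is antitone
  have ha_anti : Antitone (fun k => f (x k)) := by
    apply antitone_nat_of_succ_le
    intro k
    calc f (x (k+1)) = f (φ (x k)) := by rw [hrec]
      _ ≤ f (ψ (ψ (x k))) := hφ _
      _ ≤ f (ψ (x k)) := hψ_le _
      _ ≤ f (x k) := hψ_le _
  have hfc : Continuous f := continuous_iff_continuousAt.2 fun z => (hf z).continuousAt
  -- f p is a cluster point of the value sequence
  have hfp_cluster : MapClusterPt (f p) atTop (fun k => f (x k)) := by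
    have h1 : ClusterPt (f p) (map f (map x atTop)) :=
      hp.map hfc.continuousAt tendsto_map
    rwa [Filter.map_map] at h1
  have hfreq : ∀ s ∈ nhds (f p), ∀ K : ℕ, ∃ k ≥ K, f (x k) ∈ s := by
    intro s hs K
    exact frequently_atTop.1 (mapClusterPt_iff_frequently.1 hfp_cluster s hs) K
  -- lower bound
  have hlb : ∀ k, f p ≤ f (x k) := by
    intro k
    by_contra hlt
    push_neg at hlt
    obtain ⟨j, hj, hjs⟩ := hfreq (Set.Ioi (f (x k))) (isOpen_Ioi.mem_nhds hlt) k
    exact absurd (ha_anti hj) (not_le.2 hjs)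
  -- convergence of values to f p
  have ha_tendsto : Tendsto (fun k => f (x k)) atTop (nhds (f p)) := by
    refine tendsto_order.2 ⟨fun b hb => Eventually.of_forall fun k => lt_of_lt_of_le hb (hlb k),
      fun b hb => ?_⟩
    obtain ⟨j, _, hjs⟩ := hfreq (Set.Iio b) (isOpen_Iio.mem_nhds hb) 0
    exact eventually_atTop.2 ⟨j, fun k hk => lt_of_le_of_lt (ha_anti hk) hjs⟩
  -- continuity of auxiliary functions
  have hg' : Continuous (fun z => (fun j => f' z j) : EuclideanSpace ℝ (Fin n) → Fin n → ℝ) :=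
    continuous_pi fun j => (EuclideanSpace.proj j).continuous.comp hlip.continuous
  have hinv : Continuous (fun z => (H z)⁻¹) := by
    rw [continuous_iff_continuousAt]
    intro z
    have hu : IsUnit (H z).det := (hHpd z).det_pos.ne'.isUnit
    have h1 : ContinuousAt Ring.inverse (H z).det := by
      simpa [hu.unit_spec] using NormedRing.inverse_continuousAt hu.unit
    exact (continuousAt_matrix_inv (H z) h1).comp hHcont.continuousAt
  have hw0c : Continuous w0 := hinv.matrix_mulVec hg'
  set Q : EuclideanSpace ℝ (Fin n) → ℝ := fun z => ∑ i, f' z i * w0 z i with hQ_def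
  have hQc : Continuous Q := by
    apply continuous_finset_sum
    intro i _
    exact ((EuclideanSpace.proj i).continuous.comp hlip.continuous).mul
      ((continuous_apply i).comp hw0c)
  set Nv : EuclideanSpace ℝ (Fin n) → ℝ := fun z => ∑ i, (w0 z i) ^ 2 with hNv_def
  have hNvc : Continuous Nv := by
    apply continuous_finset_sum
    intro i _
    exact ((continuous_apply i).comp hw0c).pow 2
  have hNv_eq : ∀ z, ‖vmap z‖ ^ 2 = Nv z := by
    intro z
    rw [← real_inner_self_eq_norm_sq, PiLp.inner_apply]
    simp only [RCLike.inner_apply, conj_trivial]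
    apply Finset.sum_congr rfl
    intro i _
    rw [hvmap z i]
    ring
  have hNv_nonneg : ∀ z, 0 ≤ Nv z := fun z =>
    Finset.sum_nonneg fun i _ => sq_nonneg _
  -- Q p > 0
  have hQp : 0 < Q p := by
    have hx : (fun j => f' p j) ≠ 0 := by
      intro h0
      apply hgp
      ext i
      exact congrFun h0 i
    have h1 := ((hHpd p).inv).dotProduct_mulVec_pos hx
    simpa [dotProduct, Pi.star_apply, star_trivial] using h1
  -- neighborhood
  set U : Set (EuclideanSpace ℝ (Fin n)) := {z | Q p / 2 < Q z} ∩ {z | Nv z < Nv p + 1}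
    with hU_def
  have hUopen : IsOpen U :=
    (isOpen_lt continuous_const hQc).inter (isOpen_lt hNvc continuous_const)
  have hpU : p ∈ U := ⟨by simpa using by linarith, by simp⟩
  set q0 : ℝ := Q p / 2 with hq0_def
  have hq0 : 0 < q0 := by positivity
  set B : ℝ := Nv p + 1 with hB_def
  have hB : 0 < B := by have := hNv_nonneg p; simp only [hB_def]; linarith
  set C : ℝ := (L : ℝ) + 1 with hC_def
  have hC : 0 < C := by positivity
  have hlipC : ∀ a b, ‖f' a - f' b‖ ≤ C * ‖a - b‖ := by
    intro a b
    have h1 := hlip.dist_le_mul a b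
    rw [dist_eq_norm, dist_eq_norm] at h1
    have : (L:ℝ) * ‖a - b‖ ≤ C * ‖a - b‖ :=
      mul_le_mul_of_nonneg_right (by simp [hC_def]) (norm_nonneg _)
    linarith
  -- choose m0
  obtain ⟨m0, hm0⟩ : ∃ m0 : ℕ, σ ^ m0 < 2 * (1 - α) * q0 / (C * B) := by
    have h1 : Tendsto (fun m : ℕ => σ ^ m) atTop (nhds 0) :=
      tendsto_pow_atTop_nhds_zero_of_lt_one hσ.1.le hσ.2
    have hpos : 0 < 2 * (1 - α) * q0 / (C * B) := by
      apply div_pos _ (by positivity)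
      have := hα.2; nlinarith
    exact (h1.eventually (gt_mem_nhds hpos)).exists
  have hσm0 : 0 < σ ^ m0 := pow_pos hσ.1 _
  have hm0' : σ ^ m0 * (C * B) ≤ 2 * (1 - α) * q0 := by
    rw [lt_div_iff₀ (by positivity)] at hm0
    linarith
  -- acceptance of m0 on U
  have haccept : ∀ z ∈ U, f (z + σ ^ m0 • vmap z) ≤ f z + α * σ ^ m0 * ⟪f' z, vmap z⟫ := by
    intro z hz
    have hd := descent_aux f f' hf C hlipC z (σ ^ m0 • vmap z)
    have h1 : (⟪f' z, σ ^ m0 • vmap z⟫ : ℝ) = σ ^ m0 * ⟪f' z, vmap z⟫ :=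
      real_inner_smul_right _ _ _
    have h2 : ‖σ ^ m0 • vmap z‖ ^ 2 = (σ ^ m0) ^ 2 * Nv z := by
      rw [norm_smul, mul_pow, ← hNv_eq z, Real.norm_eq_abs, sq_abs]
    rw [h1, h2, hq_eq z] at hd
    have hqz : Q p / 2 < Q z := hz.1
    have hNz : Nv z < Nv p + 1 := hz.2
    have hNz0 : 0 ≤ Nv z := hNv_nonneg z
    rw [hq_eq z]
    have hkey : σ ^ m0 * (C * Nv z) ≤ 2 * (1 - α) * Q z := by
      have h3 : σ ^ m0 * (C * Nv z) ≤ σ ^ m0 * (C * B) := by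
        apply mul_le_mul_of_nonneg_left _ hσm0.le
        apply mul_le_mul_of_nonneg_left _ hC.le
        simp only [hB_def]; linarith
      have h4 : 2 * (1 - α) * q0 ≤ 2 * (1 - α) * Q z := by
        have := hα.2
        have hq0Q : q0 ≤ Q z := by simp only [hq0_def]; linarith
        nlinarith
      linarith
    nlinarith [hd, hσm0, hα.2]
  -- uniform decrease on U
  set δ : ℝ := α * σ ^ m0 * q0 with hδ_def
  have hδ : 0 < δ := by
    have := hα.1
    positivity
  have hdec : ∀ z ∈ U, f (ψ z) ≤ f z - δ := by
    intro z hz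
    have hs_le : smap z ≤ m0 := (hsmap z).2 (haccept z hz)
    have hpow : σ ^ m0 ≤ σ ^ (smap z) := pow_le_pow_of_le_one hσ.1.le hσ.2.le hs_le
    have h1 : f (z + σ ^ (smap z) • vmap z) ≤ f z + α * σ ^ (smap z) * ⟪f' z, vmap z⟫ :=
      (hsmap z).1
    rw [hψ z]
    have hqz : (⟪f' z, vmap z⟫ : ℝ) ≤ -q0 := by
      rw [hq_eq z]
      have : Q p / 2 < Q z := hz.1
      simp only [hq0_def]; linarith
    have hps : 0 < σ ^ (smap z) := pow_pos hσ.1 _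
    have h2 : α * σ ^ (smap z) * ⟪f' z, vmap z⟫ ≤ -δ := by
      have e1 : α * σ ^ (smap z) * ⟪f' z, vmap z⟫ ≤ α * σ ^ (smap z) * (-q0) :=
        mul_le_mul_of_nonneg_left hqz (mul_pos hα.1 hps).le
      have e2 : α * σ ^ m0 * q0 ≤ α * σ ^ (smap z) * q0 :=
        mul_le_mul_of_nonneg_right (mul_le_mul_of_nonneg_left hpow hα.1.le) hq0.le
      simp only [hδ_def]
      nlinarith [e1, e2]
    linarith [h1]
  -- final contradiction
  obtain ⟨K, hK⟩ : ∃ K : ℕ, ∀ k ≥ K, f (x k) < f p + δ :=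
    eventually_atTop.1 (ha_tendsto.eventually (gt_mem_nhds (by linarith)))
  obtain ⟨k, hkK, hkU⟩ : ∃ k ≥ K, x k ∈ U :=
    frequently_atTop.1 (mapClusterPt_iff_frequently.1 hp U (hUopen.mem_nhds hpU)) K
  have h1 : f (x (k+1)) ≤ f (x k) - δ := by
    calc f (x (k+1)) = f (φ (x k)) := by rw [hrec]
      _ ≤ f (ψ (ψ (x k))) := hφ _
      _ ≤ f (ψ (x k)) := hψ_le _
      _ ≤ f (x k) - δ := hdec _ hkU
  have h2 := hlb (k+1)
  have h3 := hK k hkK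
  linarith
end

section
/- Let φ : ℝⁿ → ℝ be strictly convex and differentiable, and suppose its Fenchel conjugate φ*(y) = sup_x (⟨y, x⟩ − φ(x)) is differentiable with ∇φ* = (∇φ)⁻¹. Let a ∈ ℝⁿ be nonzero, c ∈ ℝ, and let HP(a, c) = {z : ⟨a, z⟩ = c}. Fix x ∈ ℝⁿ, and suppose γ ∈ ℝ minimizes the function γ̃ ↦ φ*(∇φ(x) − γ̃ a) + γ̃ c over ℝ. Then the point p = ∇φ*(∇φ(x) − γ a) is the Bregman projection of x onto HP(a, c) with respect to φ; that is, ⟨a, p⟩ = c and D_φ(p, x) ≤ D_φ(z, x) for every z with ⟨a, z⟩ = c. -/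
open scoped RealInnerProductSpace


lemma grad_first_order {n : ℕ} {f : EuclideanSpace ℝ (Fin n) → ℝ}
    (hf : ConvexOn ℝ Set.univ f) {g p : EuclideanSpace ℝ (Fin n)}
    (hg : HasGradientAt f g p) (z : EuclideanSpace ℝ (Fin n)) :
    f p + ⟪g, z - p⟫ ≤ f z := by
  set h : ℝ → ℝ := fun t => f (p + t • (z - p)) with hh
  have hconv : ConvexOn ℝ Set.univ h := by
    have := hf.comp_affineMap (AffineMap.lineMap p z : ℝ →ᵃ[ℝ] EuclideanSpace ℝ (Fin n))
    convert this using 1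
    case e'_12 =>
      funext t
      simp [h, AffineMap.lineMap_apply, Function.comp, smul_sub]
      abel_nf
    all_goals rfl
  have hline : ∀ t : ℝ, HasDerivAt (fun t : ℝ => p + t • (z - p)) (z - p) t := by
    intro t
    simpa using ((hasDerivAt_id t).smul_const (z - p)).const_add p
  have hd : HasDerivAt h ⟪g, z - p⟫ 0 := by
    have hg' : HasFDerivAt f ((InnerProductSpace.toDual ℝ (EuclideanSpace ℝ (Fin n))) g)
        (p + (0:ℝ) • (z - p)) := by simpa using hg.hasFDerivAt
    have := hg'.comp_hasDerivAt 0 (hline 0)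
    simp only [h, real_inner_comm, add_comm] at this ⊢
    exact this
  have h01 : deriv h 0 ≤ (h 1 - h 0) / (1 - 0) := by
    have := hconv.deriv_le_slope (Set.mem_univ (0:ℝ)) (Set.mem_univ (1:ℝ)) one_pos
    have h2 := this hd.differentiableAt
    simpa [slope_def_field] using h2
  rw [hd.deriv] at h01
  have h0 : h 0 = f p := by simp [h]
  have h1 : h 1 = f z := by simp [h]
  rw [h0, h1] at h01
  linarith


/-- If `γ` minimizes `γ̃ ↦ φ*(∇φ(x) − γ̃a) + γ̃c`, then
`p = ∇φ*(∇φ(x) − γa)` is the Bregman projection of `x` onto the hyperplane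
`HP(a, c) = {z : ⟨a, z⟩ = c}`: it lies on the hyperplane and minimizes `D_φ(·, x)` there. -/
theorem bregman_projection_onto_hyperplane {n : ℕ}
    (φ : EuclideanSpace ℝ (Fin n) → ℝ) (hφ : StrictConvexOn ℝ Set.univ φ)
    (φ' : EuclideanSpace ℝ (Fin n) → EuclideanSpace ℝ (Fin n))
    (hφd : ∀ z, HasGradientAt φ (φ' z) z)
    -- `φstar` is the Fenchel conjugate of `φ`, assumed finite
    (φstar : EuclideanSpace ℝ (Fin n) → ℝ)
    (hconj : ∀ y, IsLUB (Set.range fun z => ⟪y, z⟫ - φ z) (φstar y))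
    -- `φstar` is differentiable with gradient `φs' = (∇φ)⁻¹`
    (φs' : EuclideanSpace ℝ (Fin n) → EuclideanSpace ℝ (Fin n))
    (hφsd : ∀ y, HasGradientAt φstar (φs' y) y)
    (hinv₁ : ∀ z, φs' (φ' z) = z) (hinv₂ : ∀ y, φ' (φs' y) = y)
    (a : EuclideanSpace ℝ (Fin n)) (ha : a ≠ 0) (c : ℝ)
    (x : EuclideanSpace ℝ (Fin n)) (γ : ℝ)
    (hγ : ∀ t : ℝ, φstar (φ' x - γ • a) + γ * c ≤ φstar (φ' x - t • a) + t * c) :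
    ⟪a, φs' (φ' x - γ • a)⟫ = c
    ∧ ∀ z : EuclideanSpace ℝ (Fin n), ⟪a, z⟫ = c →
        φ (φs' (φ' x - γ • a)) - φ x - ⟪φ' x, φs' (φ' x - γ • a) - x⟫
          ≤ φ z - φ x - ⟪φ' x, z - x⟫ := by
  set p := φs' (φ' x - γ • a) with hp
  -- Part 1: derivative of G(t) = φstar (φ' x - t • a) + t * c vanishes at γ
  have hpart1 : ⟪a, p⟫ = c := by
    set G : ℝ → ℝ := fun t => φstar (φ' x - t • a) + t * c with hG
    have hcurve : HasDerivAt (fun t : ℝ => φ' x - t • a) (-a) γ := by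
      simpa using ((hasDerivAt_id γ).smul_const a).const_sub (φ' x)
    have hGd : HasDerivAt G (-⟪a, p⟫ + c) γ := by
      have h1 := ((hφsd (φ' x - γ • a)).hasFDerivAt).comp_hasDerivAt γ hcurve
      have h2 : HasDerivAt (fun t : ℝ => t * c) c γ := by
        simpa using (hasDerivAt_id γ).mul_const c
      have h3 := h1.add h2
      have hv : (InnerProductSpace.toDual ℝ (EuclideanSpace ℝ (Fin n))
          (φs' (φ' x - γ • a))) (-a) + c = -⟪a, p⟫ + c := by
        rw [InnerProductSpace.toDual_apply_apply, inner_neg_right, real_inner_comm]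
      rw [← hv]
      exact h3
    have hmin : IsLocalMin G γ := Filter.Eventually.of_forall fun t => hγ t
    have := hmin.hasDerivAt_eq_zero hGd
    linarith [this]
  refine ⟨hpart1, fun z hz => ?_⟩
  -- Part 2: first-order condition at p with gradient φ' p = φ' x - γ • a
  have hgp : φ' p = φ' x - γ • a := by rw [hp, hinv₂]
  have hfo := grad_first_order hφ.convexOn (hgp ▸ hφd p) z
  have hip : ⟪a, z - p⟫ = 0 := by
    rw [inner_sub_right, hz, hpart1, sub_self]
  have hexp : ⟪φ' x - γ • a, z - p⟫ = ⟪φ' x, z - p⟫ := by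
    rw [inner_sub_left, real_inner_smul_left, hip]; ring
  rw [hexp] at hfo
  have : ⟪φ' x, z - x⟫ - ⟪φ' x, p - x⟫ = ⟪φ' x, z - p⟫ := by
    rw [← inner_sub_right]; congr 1; abel
  linarith [this, hfo]
end

section
/- Let φ(x) = Σ_{j=1}^n x_j log x_j be the negative entropy on the positive orthant ℝⁿ_{>0}, generating the Kullback–Leibler divergence KL(v, u) = Σ_j [v_j log(v_j/u_j) + u_j − v_j]. Let a ∈ ℝⁿ be nonzero, c ∈ ℝ, and x ∈ ℝⁿ_{>0}, and suppose γ ∈ ℝ minimizes γ̃ ↦ Σ_j x_j e^{−γ̃ a_j} + γ̃ c over ℝ. Then the componentwise product p = (x_j e^{−γ a_j})_{j=1}^n satisfies ⟨a, p⟩ = c and minimizes KL(z, x) over all z ∈ ℝⁿ_{>0} with ⟨a, z⟩ = c. -/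
/-- If `γ` minimizes `γ̃ ↦ Σⱼ xⱼ e^{−γ̃ aⱼ} + γ̃c`, then the point
`p = (xⱼ e^{−γ aⱼ})ⱼ` lies on the hyperplane `⟨a, p⟩ = c` and minimizes the Kullback–Leibler
divergence `KL(z, x) = Σⱼ [zⱼ log(zⱼ/xⱼ) + xⱼ − zⱼ]` over positive `z` on that hyperplane. -/
theorem kl_projection_onto_hyperplane {n : ℕ}
    (x : Fin n → ℝ) (hx : ∀ j, 0 < x j)
    (a : Fin n → ℝ) (ha : a ≠ 0) (c : ℝ) (γ : ℝ)
    (hγ : ∀ t : ℝ,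
      (∑ j, x j * Real.exp (-(γ * a j))) + γ * c
        ≤ (∑ j, x j * Real.exp (-(t * a j))) + t * c) :
    (∑ j, a j * (x j * Real.exp (-(γ * a j)))) = c
    ∧ ∀ z : Fin n → ℝ, (∀ j, 0 < z j) → (∑ j, a j * z j) = c →
        (∑ j, ((x j * Real.exp (-(γ * a j))) * Real.log ((x j * Real.exp (-(γ * a j))) / x j)
          + x j - x j * Real.exp (-(γ * a j))))
        ≤ (∑ j, (z j * Real.log (z j / x j) + x j - z j)) := by
  have hppos : ∀ j, 0 < x j * Real.exp (-(γ * a j)) :=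
    fun j => mul_pos (hx j) (Real.exp_pos _)
  set p : Fin n → ℝ := fun j => x j * Real.exp (-(γ * a j)) with hp
  -- Derivative condition
  have hderiv : HasDerivAt (fun t : ℝ => (∑ j, x j * Real.exp (-(t * a j))) + t * c)
      ((∑ j, x j * (-(a j) * Real.exp (-(γ * a j)))) + c) γ := by
    have h1 : HasDerivAt (fun t : ℝ => ∑ j, x j * Real.exp (-(t * a j)))
        (∑ j, x j * (-(a j) * Real.exp (-(γ * a j)))) γ := by
      apply HasDerivAt.fun_sum
      intro j _
      have h2 : HasDerivAt (fun t : ℝ => -(t * a j)) (-(a j)) γ := by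
        simpa using ((hasDerivAt_id γ).mul_const (a j)).fun_neg
      simpa [mul_comm] using (h2.exp.const_mul (x j))
    have h3 : HasDerivAt (fun t : ℝ => t * c) c γ := by
      simpa using (hasDerivAt_id γ).mul_const c
    exact h1.add h3
  have hmin : IsLocalMin (fun t : ℝ => (∑ j, x j * Real.exp (-(t * a j))) + t * c) γ := by
    have : IsMinOn (fun t : ℝ => (∑ j, x j * Real.exp (-(t * a j))) + t * c) Set.univ γ :=
      fun t _ => hγ t
    exact this.isLocalMin (by simp)
  have hzero := hmin.hasDerivAt_eq_zero hderiv
  have hplane : (∑ j, a j * p j) = c := by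
    have heq : (∑ j, x j * (-(a j) * Real.exp (-(γ * a j)))) = -(∑ j, a j * p j) := by
      rw [← Finset.sum_neg_distrib]
      apply Finset.sum_congr rfl
      intro j _; simp only [hp]; ring
    rw [heq] at hzero
    linarith
  refine ⟨hplane, ?_⟩
  intro z hz hzc
  have key : ∀ j, p j * Real.log (p j / x j) + x j - p j + (-(γ * a j)) * (z j - p j)
      ≤ z j * Real.log (z j / x j) + x j - z j := by
    intro j
    have hlogp : Real.log (p j / x j) = -(γ * a j) := by
      have hpx : p j / x j = Real.exp (-(γ * a j)) := by
        show x j * Real.exp (-(γ * a j)) / x j = _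
        rw [mul_comm, mul_div_assoc, div_self (hx j).ne', mul_one]
      rw [hpx, Real.log_exp]
    have hlogz : Real.log (z j / x j) = Real.log (z j / p j) + (-(γ * a j)) := by
      have hzx : z j / x j = (z j / p j) * (p j / x j) := by
        rw [div_mul_div_comm, mul_comm (p j) (x j),
          mul_div_mul_right _ _ (hppos j).ne']
      rw [hzx, Real.log_mul (div_pos (hz j) (hppos j)).ne'
        (div_pos (hppos j) (hx j)).ne', hlogp]
    rw [hlogp, hlogz]
    have hnn : z j - p j ≤ z j * Real.log (z j / p j) := by
      have ht : 0 < z j / p j := div_pos (hz j) (hppos j)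
      have h1 := Real.one_sub_inv_le_log_of_pos ht
      have h2 : z j * (1 - (z j / p j)⁻¹) ≤ z j * Real.log (z j / p j) :=
        mul_le_mul_of_nonneg_left h1 (hz j).le
      have h3 : z j * (1 - (z j / p j)⁻¹) = z j - p j := by
        rw [inv_div, mul_sub, mul_one, mul_div_assoc', mul_comm (z j) (p j),
          mul_div_assoc, div_self (hz j).ne', mul_one]
      linarith
    nlinarith [hnn]
  have hsum := Finset.sum_le_sum (fun j (_ : j ∈ Finset.univ) => key j)
  rw [Finset.sum_add_distrib] at hsum
  have hlin : (∑ j, (-(γ * a j)) * (z j - p j)) = 0 := by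
    have heq2 : (∑ j, (-(γ * a j)) * (z j - p j))
        = -γ * ((∑ j, a j * z j) - (∑ j, a j * p j)) := by
      rw [← Finset.sum_sub_distrib, Finset.mul_sum]
      apply Finset.sum_congr rfl
      intro j _; ring
    rw [heq2, hzc, hplane, sub_self, mul_zero]
  rw [hlin, add_zero] at hsum
  exact hsum
end

section
/- Let C_1,…,C_r ⊆ ℝⁿ and Q_1,…,Q_s ⊆ ℝᵐ be nonempty closed convex sets, let A be an m×n real matrix, and let v_i, w_j > 0 be weights. Then the proximity function f(x) = (1/2) Σ_i v_i dist(x, C_i)² + (1/2) Σ_j w_j dist(Ax, Q_j)² is differentiable with gradient ∇f(x) = Σ_i v_i (x − P_{C_i}(x)) + Σ_j w_j Aᵀ(Ax − P_{Q_j}(Ax)), and ∇f is Lipschitz continuous with constant L = Σ_i v_i + ρ(AᵀA) · Σ_j w_j, where ρ(AᵀA) is the spectral radius of AᵀA (the square of the operator norm of A). -/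
open Matrix
open scoped RealInnerProductSpace

section aux
variable {E : Type*} [NormedAddCommGroup E] [InnerProductSpace ℝ E]

lemma aux_upper {S : Set E} {u p : E} (hp : p ∈ S)
    (hd : dist u p = Metric.infDist u S) (z : E) :
    (1/2 : ℝ) * (Metric.infDist z S)^2
      ≤ (1/2) * (Metric.infDist u S)^2 + ⟪u - p, z - u⟫ + (1/2) * ‖z - u‖^2 := by
  have h1 : Metric.infDist z S ≤ ‖z - p‖ := by
    simpa [dist_eq_norm] using Metric.infDist_le_dist_of_mem (x := z) hp
  have h0 : (0:ℝ) ≤ Metric.infDist z S := Metric.infDist_nonneg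
  have h2 : (Metric.infDist z S)^2 ≤ ‖z - p‖^2 := by
    exact pow_le_pow_left₀ h0 h1 2
  have hiu : Metric.infDist u S = ‖u - p‖ := by rw [← hd, dist_eq_norm]
  have hzp : z - p = (u - p) + (z - u) := by abel
  have expand : ‖z - p‖^2 = ‖u - p‖^2 + 2*⟪u-p, z-u⟫ + ‖z-u‖^2 := by
    rw [hzp, norm_add_sq_real]
  rw [hiu]
  nlinarith [h2, expand]

lemma aux_mid {S : Set E} (hcv : Convex ℝ S) (P : E → E)
    (hP : ∀ u, P u ∈ S ∧ dist u (P u) = Metric.infDist u S) {x y z : E}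
    (h : x + x = y + z) :
    (Metric.infDist x S)^2 ≤ ((Metric.infDist y S)^2 + (Metric.infDist z S)^2)/2 := by
  set q1 := P y
  set q2 := P z
  have hm : (1/2:ℝ) • q1 + (1/2:ℝ) • q2 ∈ S :=
    hcv (hP y).1 (hP z).1 (by norm_num) (by norm_num) (by norm_num)
  have h1 : Metric.infDist x S ≤ ‖x - ((1/2:ℝ) • q1 + (1/2:ℝ) • q2)‖ := by
    simpa [dist_eq_norm] using Metric.infDist_le_dist_of_mem (x := x) hm
  have hx : x - ((1/2:ℝ) • q1 + (1/2:ℝ) • q2) = (1/2:ℝ) • ((y - q1) + (z - q2)) := by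
    have h2x : (2:ℝ) • x = y + z := by rw [two_smul]; exact h
    have hx2 : x = (1/2:ℝ) • y + (1/2:ℝ) • z := by
      have := congrArg (fun t => (1/2:ℝ) • t) h2x
      simpa [smul_smul, smul_add, show (1/2:ℝ)*2 = 1 by norm_num] using this
    rw [hx2]; rw [smul_add, smul_sub, smul_sub]; abel
  have hsq : ‖(y - q1) + (z - q2)‖^2 ≤ 2*‖y - q1‖^2 + 2*‖z - q2‖^2 := by
    have := norm_add_sq_real (y - q1) (z - q2)
    nlinarith [real_inner_le_norm (y - q1) (z - q2), sq_nonneg (‖y - q1‖ - ‖z - q2‖)]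
  have hny : ‖y - q1‖ = Metric.infDist y S := by rw [← dist_eq_norm]; exact (hP y).2
  have hnz : ‖z - q2‖ = Metric.infDist z S := by rw [← dist_eq_norm]; exact (hP z).2
  have h0 : (0:ℝ) ≤ Metric.infDist x S := Metric.infDist_nonneg
  have h2 : (Metric.infDist x S)^2 ≤ ‖x - ((1/2:ℝ) • q1 + (1/2:ℝ) • q2)‖^2 :=
    pow_le_pow_left₀ h0 h1 2
  have hn : ‖(1/2:ℝ) • ((y - q1) + (z - q2))‖^2 = (1/4) * ‖(y - q1) + (z - q2)‖^2 := by
    rw [norm_smul, mul_pow, Real.norm_eq_abs]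
    norm_num
  rw [hx, hn] at h2
  rw [hny, hnz] at hsq
  linarith

lemma aux_core {S : Set E} (hcv : Convex ℝ S) (P : E → E)
    (hP : ∀ u, P u ∈ S ∧ dist u (P u) = Metric.infDist u S) (x : E) :
    HasFDerivAt (fun y => (1/2:ℝ) * (Metric.infDist y S)^2) (innerSL ℝ (x - P x)) x := by
  rw [hasFDerivAt_iff_isLittleO_nhds_zero, Asymptotics.isLittleO_iff]
  intro c hc
  filter_upwards [Metric.ball_mem_nhds (0:E) (show (0:ℝ) < 2*c by linarith)] with h hmem
  have hh : ‖h‖ < 2*c := by simpa using hmem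
  have hsub : x + h - x = h := by abel
  have up := aux_upper (hP x).1 (hP x).2 (x + h)
  rw [hsub] at up
  have lo : 1/2 * Metric.infDist x S ^ 2 + ⟪x - P x, h⟫ - 1/2 * ‖h‖^2
      ≤ 1/2 * Metric.infDist (x + h) S ^ 2 := by
    have hmid : x + x = (x + h) + (x - h) := by abel
    have h1 := aux_mid hcv P hP hmid
    have h2 := aux_upper (hP x).1 (hP x).2 (x - h)
    have hzx : x - h - x = -h := by abel
    rw [hzx, inner_neg_right, norm_neg] at h2
    linarith
  have key : |1/2 * Metric.infDist (x + h) S ^ 2 - 1/2 * Metric.infDist x S ^ 2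
      - ⟪x - P x, h⟫| ≤ 1/2 * ‖h‖^2 := by
    rw [abs_le]; constructor <;> linarith
  show ‖1/2 * Metric.infDist (x + h) S ^ 2 - 1/2 * Metric.infDist x S ^ 2
      - (innerSL ℝ (x - P x)) h‖ ≤ c * ‖h‖
  have hb : (innerSL ℝ (x - P x)) h = ⟪x - P x, h⟫ := rfl
  rw [hb, Real.norm_eq_abs]
  nlinarith [norm_nonneg h, key, hh]

lemma aux_var {S : Set E} (hcv : Convex ℝ S) {u p : E} (hp : p ∈ S)
    (hd : dist u p = Metric.infDist u S) : ∀ c ∈ S, ⟪u - p, c - p⟫ ≤ 0 := by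
  have h : ‖u - p‖ = ⨅ w : S, ‖u - w‖ := by
    rw [← dist_eq_norm, hd, Metric.infDist_eq_iInf]
    congr 1; ext w; rw [dist_eq_norm]
  exact (norm_eq_iInf_iff_real_inner_le_zero hcv hp).1 h

lemma aux_nonexp {S : Set E} (hcv : Convex ℝ S) (P : E → E)
    (hP : ∀ u, P u ∈ S ∧ dist u (P u) = Metric.infDist u S) (x y : E) :
    ‖(x - P x) - (y - P y)‖ ≤ ‖x - y‖ := by
  have h1 := aux_var hcv (hP x).1 (hP x).2 (P y) (hP y).1
  have h2 := aux_var hcv (hP y).1 (hP y).2 (P x) (hP x).1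
  set a := (x - P x) - (y - P y) with ha
  have key : ‖a‖^2 ≤ ⟪a, x - y⟫ := by
    have e1 : ⟪a, a⟫ = ⟪a, x - y⟫ - ⟪a, P x - P y⟫ := by
      rw [← inner_sub_right]; congr 1; rw [ha]; abel
    have t1 : ⟪x - P x, P x - P y⟫ = -⟪x - P x, P y - P x⟫ := by
      rw [show P x - P y = -(P y - P x) from by abel, inner_neg_right]
    have e2 : ⟪a, P x - P y⟫ = -⟪x - P x, P y - P x⟫ - ⟪y - P y, P x - P y⟫ := by
      rw [ha, inner_sub_left, t1]
    have := real_inner_self_eq_norm_sq a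
    nlinarith [h1, h2]
  nlinarith [real_inner_le_norm a (x - y), norm_nonneg a, norm_nonneg (x - y)]

lemma aux_adj {m n : ℕ} (A : Matrix (Fin m) (Fin n) ℝ)
    (u : EuclideanSpace ℝ (Fin m)) (z : EuclideanSpace ℝ (Fin n)) :
    ⟪Matrix.toEuclideanLin Aᵀ u, z⟫ = ⟪u, Matrix.toEuclideanLin A z⟫ := by
  simp only [Matrix.toEuclideanLin_apply, PiLp.inner_apply, RCLike.inner_apply, conj_trivial]
  simp only [PiLp.toLp_apply, Matrix.mulVec, dotProduct, Matrix.transpose_apply]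
  simp only [Finset.sum_mul, Finset.mul_sum]
  rw [Finset.sum_comm]
  exact Finset.sum_congr rfl fun i _ => Finset.sum_congr rfl fun k _ => by ring

end aux

lemma aux_opbound {m n : ℕ} (A : Matrix (Fin m) (Fin n) ℝ) (u : EuclideanSpace ℝ (Fin m)) :
    ‖Matrix.toEuclideanLin Aᵀ u‖
      ≤ ‖(Matrix.toEuclideanLin A).toContinuousLinearMap‖ * ‖u‖ := by
  set B : EuclideanSpace ℝ (Fin n) →L[ℝ] EuclideanSpace ℝ (Fin m) :=
    (Matrix.toEuclideanLin A).toContinuousLinearMap with hB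
  set a := Matrix.toEuclideanLin Aᵀ u with ha
  have h1 : ‖a‖^2 = ⟪u, Matrix.toEuclideanLin A a⟫ := by
    rw [← aux_adj]; exact (real_inner_self_eq_norm_sq a).symm
  have h2 : ⟪u, Matrix.toEuclideanLin A a⟫ ≤ ‖u‖ * ‖Matrix.toEuclideanLin A a‖ :=
    real_inner_le_norm _ _
  have h3 : ‖Matrix.toEuclideanLin A a‖ ≤ ‖B‖ * ‖a‖ := B.le_opNorm a
  have h4 : ‖a‖^2 ≤ (‖B‖ * ‖u‖) * ‖a‖ := by
    calc ‖a‖^2 = ⟪u, Matrix.toEuclideanLin A a⟫ := h1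
      _ ≤ ‖u‖ * ‖Matrix.toEuclideanLin A a‖ := h2
      _ ≤ ‖u‖ * (‖B‖ * ‖a‖) := mul_le_mul_of_nonneg_left h3 (norm_nonneg u)
      _ = (‖B‖ * ‖u‖) * ‖a‖ := by ring
  rcases (norm_nonneg a).lt_or_eq with hpos | hzero
  · rw [pow_two] at h4
    exact le_of_mul_le_mul_right h4 hpos
  · rw [← hzero]
    positivity

/-- For the linear split feasibility proximity function
`f(x) = (1/2)Σᵢ vᵢ dist(x, Cᵢ)² + (1/2)Σⱼ wⱼ dist(Ax, Qⱼ)²`, `f` is differentiable with gradient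
`∇f(x) = Σᵢ vᵢ(x − P_{Cᵢ}x) + Σⱼ wⱼ Aᵀ(Ax − P_{Qⱼ}(Ax))`, and `∇f` is Lipschitz with constant
`L = Σᵢ vᵢ + ρ(AᵀA)·Σⱼ wⱼ`, where `ρ(AᵀA)` is the square of the operator norm of `A`. -/
theorem linear_proximity_gradient_lipschitz {n m r s : ℕ}
    (C : Fin r → Set (EuclideanSpace ℝ (Fin n)))
    (Q : Fin s → Set (EuclideanSpace ℝ (Fin m)))
    (hCne : ∀ i, (C i).Nonempty) (hCcl : ∀ i, IsClosed (C i)) (hCcv : ∀ i, Convex ℝ (C i))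
    (hQne : ∀ j, (Q j).Nonempty) (hQcl : ∀ j, IsClosed (Q j)) (hQcv : ∀ j, Convex ℝ (Q j))
    (A : Matrix (Fin m) (Fin n) ℝ)
    (v : Fin r → ℝ) (w : Fin s → ℝ) (hv : ∀ i, 0 < v i) (hw : ∀ j, 0 < w j)
    (PC : Fin r → EuclideanSpace ℝ (Fin n) → EuclideanSpace ℝ (Fin n))
    (PQ : Fin s → EuclideanSpace ℝ (Fin m) → EuclideanSpace ℝ (Fin m))
    (hPC : ∀ i u, PC i u ∈ C i ∧ dist u (PC i u) = Metric.infDist u (C i))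
    (hPQ : ∀ j y, PQ j y ∈ Q j ∧ dist y (PQ j y) = Metric.infDist y (Q j)) :
    (∀ x : EuclideanSpace ℝ (Fin n),
      HasGradientAt
        (fun y => (1/2) * ∑ i, v i * (Metric.infDist y (C i))^2
          + (1/2) * ∑ j, w j * (Metric.infDist (Matrix.toEuclideanLin A y) (Q j))^2)
        (∑ i, v i • (x - PC i x)
          + ∑ j, w j • Matrix.toEuclideanLin Aᵀ
              (Matrix.toEuclideanLin A x - PQ j (Matrix.toEuclideanLin A x))) x)
    ∧ (∀ x y : EuclideanSpace ℝ (Fin n),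
        ‖(∑ i, v i • (x - PC i x)
            + ∑ j, w j • Matrix.toEuclideanLin Aᵀ
                (Matrix.toEuclideanLin A x - PQ j (Matrix.toEuclideanLin A x)))
          - (∑ i, v i • (y - PC i y)
            + ∑ j, w j • Matrix.toEuclideanLin Aᵀ
                (Matrix.toEuclideanLin A y - PQ j (Matrix.toEuclideanLin A y)))‖
        ≤ ((∑ i, v i) + ‖(Matrix.toEuclideanLin A).toContinuousLinearMap‖^2 * ∑ j, w j)
            * ‖x - y‖) := by
  set B : EuclideanSpace ℝ (Fin n) →L[ℝ] EuclideanSpace ℝ (Fin m) :=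
    (Matrix.toEuclideanLin A).toContinuousLinearMap with hB
  have hBc : ∀ z, Matrix.toEuclideanLin A z = B z := fun _ => rfl
  constructor
  · intro x
    rw [hasGradientAt_iff_hasFDerivAt]
    have hterm1 : HasFDerivAt
        (fun y => (1/2:ℝ) * ∑ i, v i * (Metric.infDist y (C i))^2)
        (∑ i, v i • (innerSL ℝ (x - PC i x))) x := by
      have feq : (fun y => (1/2:ℝ) * ∑ i, v i * (Metric.infDist y (C i))^2)
          = (fun y => ∑ i, v i * ((1/2:ℝ) * (Metric.infDist y (C i))^2)) := by
        funext y; rw [Finset.mul_sum]; exact Finset.sum_congr rfl fun i _ => by ring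
      rw [feq]
      exact HasFDerivAt.fun_sum fun i _ =>
        (aux_core (hCcv i) (PC i) (hPC i) x).const_mul (v i)
    have hterm2 : HasFDerivAt
        (fun y => (1/2:ℝ) * ∑ j, w j * (Metric.infDist (Matrix.toEuclideanLin A y) (Q j))^2)
        (∑ j, w j • ((innerSL ℝ (B x - PQ j (B x))).comp B)) x := by
      have feq : (fun y => (1/2:ℝ) * ∑ j, w j * (Metric.infDist (Matrix.toEuclideanLin A y) (Q j))^2)
          = (fun y => ∑ j, w j * ((1/2:ℝ) * (Metric.infDist (B y) (Q j))^2)) := by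
        funext y; rw [Finset.mul_sum]
        exact Finset.sum_congr rfl fun j _ => by rw [hBc]; ring
      rw [feq]
      refine HasFDerivAt.fun_sum fun j _ => ?_
      have hc : HasFDerivAt (fun y => (1/2:ℝ) * (Metric.infDist (B y) (Q j))^2)
          ((innerSL ℝ (B x - PQ j (B x))).comp B) x :=
        (aux_core (hQcv j) (PQ j) (hPQ j) (B x)).comp x B.hasFDerivAt
      exact hc.const_mul (w j)
    have hf := hterm1.add hterm2
    have hDeq : (InnerProductSpace.toDual ℝ (EuclideanSpace ℝ (Fin n)))
          (∑ i, v i • (x - PC i x)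
            + ∑ j, w j • Matrix.toEuclideanLin Aᵀ
                (Matrix.toEuclideanLin A x - PQ j (Matrix.toEuclideanLin A x)))
        = (∑ i, v i • (innerSL ℝ (x - PC i x)))
            + (∑ j, w j • ((innerSL ℝ (B x - PQ j (B x))).comp B)) := by
      apply ContinuousLinearMap.ext
      intro z
      simp only [InnerProductSpace.toDual_apply_apply, ContinuousLinearMap.add_apply,
        ContinuousLinearMap.coe_sum', Finset.sum_apply, ContinuousLinearMap.coe_smul',
        Pi.smul_apply, innerSL_apply_apply, ContinuousLinearMap.coe_comp', Function.comp_apply,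
        smul_eq_mul, inner_add_left, sum_inner, real_inner_smul_left]
      congr 1
      refine Finset.sum_congr rfl fun j _ => ?_
      rw [aux_adj, hBc x, hBc z]
    rw [hDeq]
    exact hf
  · intro x y
    have hrw : (∑ i, v i • (x - PC i x)
            + ∑ j, w j • Matrix.toEuclideanLin Aᵀ
                (Matrix.toEuclideanLin A x - PQ j (Matrix.toEuclideanLin A x)))
          - (∑ i, v i • (y - PC i y)
            + ∑ j, w j • Matrix.toEuclideanLin Aᵀ
                (Matrix.toEuclideanLin A y - PQ j (Matrix.toEuclideanLin A y)))
        = ∑ i, v i • ((x - PC i x) - (y - PC i y))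
          + ∑ j, w j • (Matrix.toEuclideanLin Aᵀ
              ((Matrix.toEuclideanLin A x - PQ j (Matrix.toEuclideanLin A x))
                - (Matrix.toEuclideanLin A y - PQ j (Matrix.toEuclideanLin A y)))) := by
      rw [add_sub_add_comm, ← Finset.sum_sub_distrib, ← Finset.sum_sub_distrib]
      congr 1
      · exact Finset.sum_congr rfl fun i _ => (smul_sub _ _ _).symm
      · exact Finset.sum_congr rfl fun j _ => by rw [← smul_sub, ← map_sub]
    rw [hrw]
    have hAB : Matrix.toEuclideanLin A x - Matrix.toEuclideanLin A y = B (x - y) := by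
      rw [map_sub]; rfl
    calc ‖∑ i, v i • ((x - PC i x) - (y - PC i y))
          + ∑ j, w j • (Matrix.toEuclideanLin Aᵀ
              ((Matrix.toEuclideanLin A x - PQ j (Matrix.toEuclideanLin A x))
                - (Matrix.toEuclideanLin A y - PQ j (Matrix.toEuclideanLin A y))))‖
        ≤ (∑ i, ‖v i • ((x - PC i x) - (y - PC i y))‖)
          + ∑ j, ‖w j • (Matrix.toEuclideanLin Aᵀ
              ((Matrix.toEuclideanLin A x - PQ j (Matrix.toEuclideanLin A x))
                - (Matrix.toEuclideanLin A y - PQ j (Matrix.toEuclideanLin A y))))‖ :=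
          (norm_add_le _ _).trans (add_le_add (norm_sum_le _ _) (norm_sum_le _ _))
      _ ≤ (∑ i, v i * ‖x - y‖) + ∑ j, w j * (‖B‖^2 * ‖x - y‖) := by
          refine add_le_add (Finset.sum_le_sum fun i _ => ?_)
            (Finset.sum_le_sum fun j _ => ?_)
          · rw [norm_smul, Real.norm_of_nonneg (hv i).le]
            exact mul_le_mul_of_nonneg_left
              (aux_nonexp (hCcv i) (PC i) (hPC i) x y) (hv i).le
          · rw [norm_smul, Real.norm_of_nonneg (hw j).le]
            refine mul_le_mul_of_nonneg_left ?_ (hw j).le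
            calc ‖Matrix.toEuclideanLin Aᵀ
                  ((Matrix.toEuclideanLin A x - PQ j (Matrix.toEuclideanLin A x))
                    - (Matrix.toEuclideanLin A y - PQ j (Matrix.toEuclideanLin A y)))‖
                ≤ ‖B‖ * ‖(Matrix.toEuclideanLin A x - PQ j (Matrix.toEuclideanLin A x))
                    - (Matrix.toEuclideanLin A y - PQ j (Matrix.toEuclideanLin A y))‖ :=
                  aux_opbound A _
              _ ≤ ‖B‖ * ‖Matrix.toEuclideanLin A x - Matrix.toEuclideanLin A y‖ :=
                  mul_le_mul_of_nonneg_left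
                    (aux_nonexp (hQcv j) (PQ j) (hPQ j) _ _) (norm_nonneg B)
              _ ≤ ‖B‖ * (‖B‖ * ‖x - y‖) := by
                  rw [hAB]
                  exact mul_le_mul_of_nonneg_left (B.le_opNorm _) (norm_nonneg B)
              _ = ‖B‖^2 * ‖x - y‖ := by ring
      _ = ((∑ i, v i) + ‖B‖^2 * ∑ j, w j) * ‖x - y‖ := by
          rw [← Finset.sum_mul, ← Finset.sum_mul]
          ring
end
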